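/- arXiv:1609.04542 — 7 statements merged into one kernel-verified Lean document; each statement's English description precedes it below -/
import Mathlib

section
/- Let w ∈ S_n be a permutation that avoids both the pattern 321 and the pattern 3412. If k = w(1), then for all i with 2 ≤ i ≤ k−1, we have w(i) = i−1. -/
/-- `w` avoids the pattern 321: no indices `i < j < k` with `w i > w j > w k`. -/
def Avoids321 {n : ℕ} (w : Equiv.Perm (Fin n)) : Prop :=
  ¬ ∃ i j k : Fin n, i < j ∧ j < k ∧ w k < w j ∧ w j < w i

/-- `w` avoids the pattern 3412: no indices `i₁ < i₂ < i₃ < i₄` with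
`w i₃ < w i₄ < w i₁ < w i₂`. -/
def Avoids3412 {n : ℕ} (w : Equiv.Perm (Fin n)) : Prop :=
  ¬ ∃ i j k l : Fin n, i < j ∧ j < k ∧ k < l ∧ w k < w l ∧ w l < w i ∧ w i < w j

/-- Lemma 7.1: if `w` avoids 321 and 3412 and `k = w(1)` (one-based), then
`w(i) = i - 1` for all `2 ≤ i ≤ k - 1`.  Here everything is zero-based:
for `1 ≤ i` with `i + 1 ≤ w 0`, one has `w i = i - 1`, i.e. `w i + 1 = i`. -/
theorem stmt0 {n : ℕ} (hn : 0 < n) (w : Equiv.Perm (Fin n))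
    (h321 : Avoids321 w) (h3412 : Avoids3412 w)
    (i : Fin n) (hi1 : 1 ≤ (i : ℕ)) (hi2 : (i : ℕ) + 1 ≤ (w ⟨0, hn⟩ : ℕ)) :
    (w i : ℕ) + 1 = (i : ℕ) := by
  have key : ∀ m (i : Fin n), (i : ℕ) = m → 1 ≤ (i : ℕ) →
      (i : ℕ) + 1 ≤ (w ⟨0, hn⟩ : ℕ) → (w i : ℕ) + 1 = (i : ℕ) := by
    intro m
    induction m using Nat.strong_induction_on with
    | _ m IH =>
      intro i him hi1 hi2
      subst him
      set z : Fin n := ⟨0, hn⟩ with hz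
      have hin : (i : ℕ) < n := i.isLt
      -- w i ≠ w z
      have hiz : i ≠ z := by
        intro h
        rw [h] at hi1
        simp [hz] at hi1
      have hwik : (w i : ℕ) ≠ (w z : ℕ) := by
        intro h
        exact hiz (w.injective (Fin.ext h))
      -- lower bound : i ≤ w i + 1
      have hlow : (i : ℕ) ≤ (w i : ℕ) + 1 := by
        by_contra hc
        push_neg at hc
        have hjn : (w i : ℕ) + 1 < n := lt_trans hc hin
        have h1 := IH ((w i : ℕ) + 1) (by omega) ⟨(w i : ℕ) + 1, hjn⟩ rfl (by simp) (by simp; omega)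
        have h2 : w ⟨(w i : ℕ) + 1, hjn⟩ = w i := Fin.ext (by simpa using h1)
        have h3 := w.injective h2
        have h4 : ((⟨(w i : ℕ) + 1, hjn⟩ : Fin n) : ℕ) = (i : ℕ) := by rw [h3]
        simp at h4
        omega
      -- position of value i - 1
      set v : Fin n := ⟨(i : ℕ) - 1, by omega⟩ with hv
      set p : Fin n := w.symm v with hp
      have hwp : w p = v := w.apply_symm_apply v
      have hwpv : (w p : ℕ) = (i : ℕ) - 1 := by rw [hwp]
      have hpz : p ≠ z := by
        intro h
        rw [h] at hwpv
        omega
      have hp1 : 1 ≤ (p : ℕ) := by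
        rcases Nat.eq_zero_or_pos (p : ℕ) with h | h
        · exact absurd (Fin.ext h : p = z) hpz
        · exact h
      have hpi : (i : ℕ) ≤ (p : ℕ) := by
        by_contra hc
        push_neg at hc
        have h1 := IH (p : ℕ) hc p rfl hp1 (by omega)
        omega
      -- suppose w i ≠ i - 1
      by_contra hne
      have hwi_ge : (i : ℕ) ≤ (w i : ℕ) := by omega
      have hpne : (p : ℕ) ≠ (i : ℕ) := by
        intro h
        have : p = i := Fin.ext h
        rw [this] at hwpv
        omega
      have hip : (i : ℕ) < (p : ℕ) := by omega
      rcases lt_or_gt_of_ne hwik with hA | hB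
      · -- 321 pattern (z, i, p)
        exact h321 ⟨z, i, p, by simp [Fin.lt_def, hz]; omega,
          Fin.lt_def.mpr hip, Fin.lt_def.mpr (by omega), Fin.lt_def.mpr (by omega)⟩
      · -- w i > k ; position of value i
        set u : Fin n := ⟨(i : ℕ), hin⟩ with hu
        set q : Fin n := w.symm u with hq
        have hwq : w q = u := w.apply_symm_apply u
        have hwqv : (w q : ℕ) = (i : ℕ) := by rw [hwq]
        have hqz : q ≠ z := by
          intro h
          rw [h] at hwqv
          omega
        have hq1 : 1 ≤ (q : ℕ) := by
          rcases Nat.eq_zero_or_pos (q : ℕ) with h | h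
          · exact absurd (Fin.ext h : q = z) hqz
          · exact h
        have hqi : (i : ℕ) < (q : ℕ) := by
          rcases Nat.lt_trichotomy (q : ℕ) (i : ℕ) with h | h | h
          · have h1 := IH (q : ℕ) h q rfl hq1 (by omega)
            omega
          · exfalso
            have : q = i := Fin.ext h
            rw [this] at hwqv
            omega
          · exact h
        have hqp : (q : ℕ) ≠ (p : ℕ) := by
          intro h
          have : q = p := Fin.ext h
          rw [this, hwpv] at hwqv
          omega
        rcases lt_or_gt_of_ne hqp with hC | hC
        · -- 321 pattern (i, q, p)
          exact h321 ⟨i, q, p, Fin.lt_def.mpr hqi, Fin.lt_def.mpr hC,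
            Fin.lt_def.mpr (by omega), Fin.lt_def.mpr (by omega)⟩
        · -- 3412 pattern (z, i, p, q)
          exact h3412 ⟨z, i, p, q, by simp [Fin.lt_def, hz]; omega,
            Fin.lt_def.mpr hip, Fin.lt_def.mpr hC,
            Fin.lt_def.mpr (by omega), Fin.lt_def.mpr (by omega), Fin.lt_def.mpr (by omega)⟩
  exact key (i : ℕ) i rfl hi1 hi2
end

section
/- Let X be a finite multiset of nonempty integer intervals (segments) [a,b] with a ≤ b. Define a partial order ⪯' on segments by [a,b] ⪯' [c,d] iff (a < c and b < d) or [a,b]=[c,d]. Then the minimal number of chains (with respect to ⪯') needed to partition X equals the maximal size of a family of segments Δ_1 ⊆ Δ_2 ⊆ ... ⊆ Δ_k in X (counted with multiplicity), where ⊆ denotes interval containment. -/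
/-- A segment `[a,b]` of integers with `a ≤ b`. -/
structure Seg where
  a : ℤ
  b : ℤ
  le : a ≤ b

/-- The strict part of the relation `⪯'`: `[a,b] ≺' [c,d]` iff `a < c` and `b < d`. -/
def SegLt (Δ Δ' : Seg) : Prop := Δ.a < Δ'.a ∧ Δ.b < Δ'.b

/-- Containment of segments: `[a,b] ⊆ [c,d]` iff `c ≤ a` and `b ≤ d`. -/
def SegSub (Δ Δ' : Seg) : Prop := Δ'.a ≤ Δ.a ∧ Δ.b ≤ Δ'.b

/-- Two segments are either comparable under containment or under `SegLt`. -/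
lemma seg_tricho (Δ Δ' : Seg) :
    (SegSub Δ Δ' ∨ SegSub Δ' Δ) ∨ (SegLt Δ Δ' ∨ SegLt Δ' Δ) := by
  simp only [SegSub, SegLt]; omega

/-- Containment-comparable segments are not `SegLt`-comparable. -/
lemma seg_excl {Δ Δ' : Seg} (h : SegSub Δ Δ' ∨ SegSub Δ' Δ) :
    ¬ SegLt Δ Δ' ∧ ¬ SegLt Δ' Δ := by
  simp only [SegSub, SegLt] at *; omega

/-- A strict order on indices refining containment, ties broken by index. -/
def SegBefore {N : ℕ} (f : Fin N → Seg) (i j : Fin N) : Prop :=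
  SegSub (f i) (f j) ∧ (¬ SegSub (f j) (f i) ∨ (i : ℕ) < (j : ℕ))

lemma segBefore_irrefl {N : ℕ} (f : Fin N → Seg) (i : Fin N) : ¬ SegBefore f i i := by
  simp only [SegBefore, SegSub]; omega

lemma segBefore_trans {N : ℕ} (f : Fin N → Seg) {i j k : Fin N}
    (h1 : SegBefore f i j) (h2 : SegBefore f j k) : SegBefore f i k := by
  simp only [SegBefore, SegSub] at *; omega

/-- For distinct containment-comparable indices, one comes before the other. -/
lemma segBefore_total {N : ℕ} (f : Fin N → Seg) {i j : Fin N} (hne : i ≠ j)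
    (h : SegSub (f i) (f j) ∨ SegSub (f j) (f i)) :
    SegBefore f i j ∨ SegBefore f j i := by
  have hv : (i : ℕ) ≠ (j : ℕ) := fun hh => hne (Fin.val_injective hh)
  simp only [SegBefore, SegSub] at *; omega

/-- The set of sizes of containment chains with top `i`. -/
def chainSet {N : ℕ} (f : Fin N → Seg) (i : Fin N) : Set ℕ :=
  {m | ∃ S : Finset (Fin N), S.card = m ∧ i ∈ S ∧
    (∀ j ∈ S, ∀ l ∈ S, SegSub (f j) (f l) ∨ SegSub (f l) (f j)) ∧
    ∀ j ∈ S, j = i ∨ SegBefore f j i}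

lemma chainSet_nonempty {N : ℕ} (f : Fin N → Seg) (i : Fin N) : (chainSet f i).Nonempty := by
  refine ⟨1, {i}, Finset.card_singleton i, Finset.mem_singleton_self i, ?_, ?_⟩
  · intro j hj l hl
    simp only [Finset.mem_singleton] at hj hl
    subst hj; subst hl
    exact Or.inl ⟨le_refl _, le_refl _⟩
  · intro j hj
    simp only [Finset.mem_singleton] at hj
    exact Or.inl hj

lemma chainSet_bdd {N : ℕ} (f : Fin N → Seg) (i : Fin N) : BddAbove (chainSet f i) := by
  refine ⟨N, fun m hm => ?_⟩
  obtain ⟨S, hc, -⟩ := hm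
  simpa [hc] using (Finset.card_le_univ S).trans_eq (by simp)

/-- Height of index `i`: the largest containment chain with top `i`. -/
noncomputable def hgt {N : ℕ} (f : Fin N → Seg) (i : Fin N) : ℕ := sSup (chainSet f i)

lemma hgt_mem {N : ℕ} (f : Fin N → Seg) (i : Fin N) : hgt f i ∈ chainSet f i :=
  Nat.sSup_mem (chainSet_nonempty f i) (chainSet_bdd f i)

lemma hgt_pos {N : ℕ} (f : Fin N → Seg) (i : Fin N) : 1 ≤ hgt f i := by
  have := (chainSet_nonempty f i)
  exact le_csSup (chainSet_bdd f i) (by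
    refine ⟨{i}, Finset.card_singleton i, Finset.mem_singleton_self i, ?_, ?_⟩
    · intro j hj l hl
      simp only [Finset.mem_singleton] at hj hl
      subst hj; subst hl
      exact Or.inl ⟨le_refl _, le_refl _⟩
    · intro j hj
      simp only [Finset.mem_singleton] at hj
      exact Or.inl hj)

lemma hgt_strict_mono {N : ℕ} (f : Fin N → Seg) {i j : Fin N} (h : SegBefore f i j) :
    hgt f i < hgt f j := by
  obtain ⟨S, hcard, hiS, hchain, htop⟩ := hgt_mem f i
  have hjS : j ∉ S := by
    intro hjS
    rcases htop j hjS with rfl | hb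
    · exact segBefore_irrefl f j h
    · exact segBefore_irrefl f i (segBefore_trans f h hb)
  have hmem : hgt f i + 1 ∈ chainSet f j := by
    refine ⟨insert j S, ?_, Finset.mem_insert_self j S, ?_, ?_⟩
    · rw [Finset.card_insert_of_notMem hjS, hcard]
    · intro a ha b hb
      have key : ∀ l ∈ S, SegSub (f l) (f j) := by
        intro l hl
        rcases htop l hl with rfl | hb'
        · exact h.1
        · exact (segBefore_trans f hb' h).1
      rcases Finset.mem_insert.mp ha with rfl | ha' <;>
        rcases Finset.mem_insert.mp hb with rfl | hb'
      · exact Or.inl ⟨le_refl _, le_refl _⟩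
      · exact Or.inr (key _ hb')
      · exact Or.inl (key _ ha')
      · exact hchain a ha' b hb'
    · intro l hl
      rcases Finset.mem_insert.mp hl with rfl | hl'
      · exact Or.inl rfl
      · rcases htop l hl' with rfl | hb'
        · exact Or.inr h
        · exact Or.inr (segBefore_trans f hb' h)
  have := le_csSup (chainSet_bdd f j) hmem
  simp only [hgt] at this ⊢
  omega

/-- Lemma 4.4 (Dilworth): for a finite multiset of segments, given as a function
`f : Fin N → Seg` (indices record multiplicity), the minimal number of chains
under `⪯'` (ladders) needed to partition the multiset equals the maximal size of
a nested family of segments in it, counted with multiplicity. -/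
theorem stmt2 {N : ℕ} (f : Fin N → Seg) :
    sInf {k : ℕ | ∃ c : Fin N → Fin k,
        ∀ i j : Fin N, c i = c j → i ≠ j → SegLt (f i) (f j) ∨ SegLt (f j) (f i)} =
    sSup {k : ℕ | ∃ S : Finset (Fin N), S.card = k ∧
        ∀ i ∈ S, ∀ j ∈ S, SegSub (f i) (f j) ∨ SegSub (f j) (f i)} := by
  classical
  set K := {k : ℕ | ∃ c : Fin N → Fin k,
      ∀ i j : Fin N, c i = c j → i ≠ j → SegLt (f i) (f j) ∨ SegLt (f j) (f i)} with hK
  set M := {k : ℕ | ∃ S : Finset (Fin N), S.card = k ∧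
      ∀ i ∈ S, ∀ j ∈ S, SegSub (f i) (f j) ∨ SegSub (f j) (f i)} with hM
  have hMbdd : BddAbove M := by
    refine ⟨N, fun m hm => ?_⟩
    obtain ⟨S, hc, -⟩ := hm
    simpa [hc] using (Finset.card_le_univ S).trans_eq (by simp)
  have hMne : M.Nonempty := ⟨0, ∅, Finset.card_empty, by simp⟩
  have hKne : K.Nonempty := by
    refine ⟨N, fun i => i, fun i j hc hne => absurd hc hne⟩
  -- sSup M ≤ sInf K
  have h1 : sSup M ≤ sInf K := by
    obtain ⟨c, hc⟩ := Nat.sInf_mem hKne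
    refine csSup_le hMne fun m hm => ?_
    obtain ⟨S, hcard, hsub⟩ := hm
    have hinj : Set.InjOn c S := by
      intro i hi j hj hcij
      by_contra hne
      have := seg_excl (hsub i hi j hj)
      rcases hc i j hcij hne with h | h
      · exact this.1 h
      · exact this.2 h
    calc m = S.card := hcard.symm
      _ ≤ (Finset.univ : Finset (Fin (sInf K))).card :=
          Finset.card_le_card_of_injOn c (fun a _ => Finset.mem_univ _) hinj
      _ = sInf K := by simp
  -- sInf K ≤ sSup M
  have hgt_le : ∀ i : Fin N, hgt f i ≤ sSup M := by
    intro i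
    obtain ⟨S, hcard, hiS, hchain, -⟩ := hgt_mem f i
    exact le_csSup hMbdd ⟨S, hcard, hchain⟩
  have h2 : sInf K ≤ sSup M := by
    refine Nat.sInf_le ?_
    rcases Nat.eq_zero_or_pos N with rfl | hN
    · exact ⟨fun i => i.elim0, fun i => i.elim0⟩
    · refine ⟨fun i => ⟨hgt f i - 1, ?_⟩, ?_⟩
      · have h1' := hgt_pos f i
        have h2' := hgt_le i
        omega
      · intro i j hc hne
        have heq : hgt f i = hgt f j := by
          have h1' := hgt_pos f i
          have h2' := hgt_pos f j
          have := Fin.mk.injEq (hgt f i - 1) _ (hgt f j - 1) _ ▸ hc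
          have hv : hgt f i - 1 = hgt f j - 1 := congrArg Fin.val hc
          omega
        have hnsub : ¬ (SegSub (f i) (f j) ∨ SegSub (f j) (f i)) := by
          intro hsub
          rcases segBefore_total f hne hsub with hb | hb
          · exact absurd heq (hgt_strict_mono f hb).ne
          · exact absurd heq.symm (hgt_strict_mono f hb).ne
        rcases seg_tricho (f i) (f j) with h | h
        · exact absurd h hnsub
        · exact h
  omega
end

section
/- Let λ = (λ_1 ≤ ... ≤ λ_m) and μ = (μ_1 ≤ ... ≤ μ_m) be weakly increasing integer sequences, and let x, w ∈ S_m both be maximal-length representatives of their double cosets S^μ x S^λ and S^μ w S^λ. If x ≰ w in the Bruhat order on S_m, then there exist indices 1 ≤ i, j ≤ m such that #{i' ≤ i : x(i') ≥ j} > #{i' ≤ i : w(i') ≥ j}, and moreover (λ_i < λ_{i+1} or i = m) and (μ_{j−1} < μ_j or j = 1). -/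
/-- The length (number of inversions) of a permutation of `Fin m`. -/
def PermLength {m : ℕ} (w : Equiv.Perm (Fin m)) : ℕ :=
  (Finset.univ.filter (fun p : Fin m × Fin m => p.1 < p.2 ∧ w p.2 < w p.1)).card

/-- The Bruhat order on `S_m`. -/
def BruhatLE {m : ℕ} (x w : Equiv.Perm (Fin m)) : Prop :=
  Relation.ReflTransGen
    (fun y z => PermLength y < PermLength z ∧
      ∃ t : Equiv.Perm (Fin m), t.IsSwap ∧ z = t * y) x w

/-- `w` is a maximal-length representative of its double coset `S^μ w S^λ`. -/
def MaxInDoubleCoset {m : ℕ} (lam mu : Fin m → ℤ) (w : Equiv.Perm (Fin m)) : Prop :=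
  ∀ u v : Equiv.Perm (Fin m), (∀ i, mu (u i) = mu i) → (∀ i, lam (v i) = lam i) →
    PermLength (u * w * v) ≤ PermLength w

open Finset Equiv

variable {m : ℕ}



def phi (i k : Fin m) (p : Fin m × Fin m) : Fin m × Fin m :=
  (if p.1 = i ∧ p.2 < k then p.1 else Equiv.swap i k p.1,
   if p.2 = k ∧ i < p.1 then p.2 else Equiv.swap i k p.2)

section phicomp
variable {i k : Fin m}

lemma phiA (hik : i < k) {b : Fin m} (hib : i < b) (hbk : b < k) : phi i k (i, b) = (i, b) := by
  unfold phi; dsimp only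
  rw [if_pos ⟨rfl, hbk⟩, if_neg (by rintro ⟨rfl, -⟩; exact absurd hbk (lt_irrefl _)),
    Equiv.swap_apply_of_ne_of_ne (ne_of_gt hib) (ne_of_lt hbk)]

lemma phiB (hik : i < k) {b : Fin m} (hkb : k < b) : phi i k (i, b) = (k, b) := by
  unfold phi; dsimp only
  rw [if_neg (by rintro ⟨-, h⟩; exact absurd (h.trans hkb) (lt_irrefl _)),
    if_neg (by rintro ⟨rfl, -⟩; exact absurd hkb (lt_irrefl _)),
    Equiv.swap_apply_left,
    Equiv.swap_apply_of_ne_of_ne (ne_of_gt (hik.trans hkb)) (ne_of_gt hkb)]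

lemma phiC (hik : i < k) {b : Fin m} (hkb : k < b) : phi i k (k, b) = (i, b) := by
  unfold phi; dsimp only
  rw [if_neg (by rintro ⟨h, -⟩; rw [h] at hik; exact absurd hik (lt_irrefl _)),
    if_neg (by rintro ⟨rfl, -⟩; exact absurd hkb (lt_irrefl _)),
    Equiv.swap_apply_right,
    Equiv.swap_apply_of_ne_of_ne (ne_of_gt (hik.trans hkb)) (ne_of_gt hkb)]

lemma phiD (hik : i < k) {a : Fin m} (hai : a < i) : phi i k (a, i) = (a, k) := by
  unfold phi; dsimp only
  rw [if_neg (by rintro ⟨rfl, -⟩; exact absurd hai (lt_irrefl _)),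
    if_neg (by rintro ⟨h, -⟩; rw [h] at hik; exact absurd hik (lt_irrefl _)),
    Equiv.swap_apply_left,
    Equiv.swap_apply_of_ne_of_ne (ne_of_lt hai) (ne_of_lt (hai.trans hik))]

lemma phiE (hik : i < k) {a : Fin m} (hai : a < i) : phi i k (a, k) = (a, i) := by
  unfold phi; dsimp only
  rw [if_neg (by rintro ⟨h, -⟩; rw [h] at hai; exact absurd hai (lt_irrefl _)),
    if_neg (by rintro ⟨-, h⟩; exact absurd (hai.trans h) (lt_irrefl _)),
    Equiv.swap_apply_right,
    Equiv.swap_apply_of_ne_of_ne (ne_of_lt hai) (ne_of_lt (hai.trans hik))]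

lemma phiF (hik : i < k) {a : Fin m} (hia : i < a) (hak : a < k) : phi i k (a, k) = (a, k) := by
  unfold phi; dsimp only
  rw [if_neg (by rintro ⟨rfl, -⟩; exact absurd hia (lt_irrefl _)), if_pos ⟨rfl, hia⟩,
    Equiv.swap_apply_of_ne_of_ne (ne_of_gt hia) (ne_of_lt hak)]

lemma phiG {a b : Fin m} (ha : a ≠ i) (ha' : a ≠ k) (hb : b ≠ i) (hb' : b ≠ k) :
    phi i k (a, b) = (a, b) := by
  unfold phi; dsimp only
  rw [if_neg (by rintro ⟨h, -⟩; exact ha h), if_neg (by rintro ⟨h, -⟩; exact hb' h),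
    Equiv.swap_apply_of_ne_of_ne ha ha', Equiv.swap_apply_of_ne_of_ne hb hb']

lemma phi_invol (hik : i < k) (a b : Fin m) (hab : a < b)
    (hne : ¬(a = i ∧ b = k)) : phi i k (phi i k (a, b)) = (a, b) := by
  rcases eq_or_ne a i with rfl | hai
  · rcases lt_trichotomy b k with hbk | rfl | hkb
    · rw [phiA hik hab hbk, phiA hik hab hbk]
    · exact absurd ⟨rfl, rfl⟩ hne
    · rw [phiB hik hkb, phiC hik hkb]
  · rcases eq_or_ne a k with rfl | hak
    · have hkb := hab
      rw [phiC hik hkb, phiB hik hkb]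
    · rcases eq_or_ne b i with rfl | hbi
      · rw [phiD hik hab, phiE hik hab]
      · rcases eq_or_ne b k with rfl | hbk
        · rcases lt_or_gt_of_ne hai with h | h
          · rw [phiE hik h, phiD hik h]
          · rw [phiF hik h hab, phiF hik h hab]
        · rw [phiG hai hak hbi hbk, phiG hai hak hbi hbk]
end phicomp

section swaplen
variable {i k : Fin m} {x : Equiv.Perm (Fin m)}

lemma phi_mem (hik : i < k) (hv : x i < x k) {a b : Fin m} (hab : a < b) (hinv : x b < x a) :
    (phi i k (a, b)).1 < (phi i k (a, b)).2 ∧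
      (x * Equiv.swap i k) (phi i k (a, b)).2 < (x * Equiv.swap i k) (phi i k (a, b)).1 := by
  have hxi : (x * Equiv.swap i k) i = x k := by
    simp [Equiv.Perm.mul_apply]
  have hxk : (x * Equiv.swap i k) k = x i := by
    simp [Equiv.Perm.mul_apply]
  have hxo : ∀ c : Fin m, c ≠ i → c ≠ k → (x * Equiv.swap i k) c = x c := by
    intro c h1 h2; simp [Equiv.Perm.mul_apply, Equiv.swap_apply_of_ne_of_ne h1 h2]
  rcases eq_or_ne a i with rfl | hai
  · rcases lt_trichotomy b k with hbk | rfl | hkb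
    · rw [phiA hik hab hbk]
      refine ⟨hab, ?_⟩
      rw [hxi, hxo b (ne_of_gt hab) (ne_of_lt hbk)]
      exact hinv.trans hv
    · exact absurd hv (not_lt_of_gt hinv)
    · rw [phiB hik hkb]
      refine ⟨hkb, ?_⟩
      rw [hxk, hxo b (ne_of_gt (hik.trans hkb)) (ne_of_gt hkb)]
      exact hinv
  · rcases eq_or_ne a k with rfl | hak
    · have hkb := hab
      rw [phiC hik hkb]
      refine ⟨hik.trans hkb, ?_⟩
      rw [hxi, hxo b (ne_of_gt (hik.trans hkb)) (ne_of_gt hkb)]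
      exact hinv
    · rcases eq_or_ne b i with rfl | hbi
      · rw [phiD hik hab]
        refine ⟨hab.trans hik, ?_⟩
        rw [hxk, hxo a (ne_of_lt hab) hak]
        exact hinv
      · rcases eq_or_ne b k with rfl | hbk
        · rcases lt_or_gt_of_ne hai with h | h
          · rw [phiE hik h]
            refine ⟨h, ?_⟩
            rw [hxi, hxo a hai hak]
            exact hinv
          · rw [phiF hik h hab]
            refine ⟨hab, ?_⟩
            rw [hxk, hxo a hai hak]
            exact hv.trans hinv
        · rw [phiG hai hak hbi hbk]
          exact ⟨hab, by rw [hxo a hai hak, hxo b hbi hbk]; exact hinv⟩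

lemma permLength_lt_mul_swap (hik : i < k) (hv : x i < x k) :
    PermLength x < PermLength (x * Equiv.swap i k) := by
  classical
  set A := Finset.univ.filter (fun p : Fin m × Fin m => p.1 < p.2 ∧ x p.2 < x p.1) with hA
  set B := Finset.univ.filter
      (fun p : Fin m × Fin m => p.1 < p.2 ∧ (x * Equiv.swap i k) p.2 < (x * Equiv.swap i k) p.1) with hB
  have hmemA : ∀ p ∈ A, p.1 < p.2 ∧ x p.2 < x p.1 := by
    intro p hp; simpa [hA] using hp
  have hsub : A.image (phi i k) ⊆ B := by
    intro q hq
    obtain ⟨p, hp, rfl⟩ := Finset.mem_image.mp hq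
    obtain ⟨h1, h2⟩ := hmemA p hp
    have := phi_mem hik hv h1 h2
    simp only [hB, Finset.mem_filter, Finset.mem_univ, true_and]
    exact this
  have hinj : Set.InjOn (phi i k) A := by
    intro p hp q hq hpq
    obtain ⟨h1, h2⟩ := hmemA p hp
    obtain ⟨h3, h4⟩ := hmemA q hq
    have hp' : ¬(p.1 = i ∧ p.2 = k) := by
      rintro ⟨e1, e2⟩; rw [e1, e2] at h2; exact absurd hv (not_lt_of_gt h2)
    have hq' : ¬(q.1 = i ∧ q.2 = k) := by
      rintro ⟨e1, e2⟩; rw [e1, e2] at h4; exact absurd hv (not_lt_of_gt h4)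
    have := phi_invol hik p.1 p.2 h1 hp'
    have h6 := phi_invol hik q.1 q.2 h3 hq'
    calc p = phi i k (phi i k (p.1, p.2)) := by rw [this]
      _ = phi i k (phi i k (q.1, q.2)) := by rw [hpq]
      _ = q := by rw [h6]
  have hikB : (i, k) ∈ B := by
    simp only [hB, Finset.mem_filter, Finset.mem_univ, true_and]
    refine ⟨hik, ?_⟩
    simp [Equiv.Perm.mul_apply, hv]
  have hikimg : (i, k) ∉ A.image (phi i k) := by
    intro hmem
    obtain ⟨p, hp, hphi⟩ := Finset.mem_image.mp hmem
    obtain ⟨h1, h2⟩ := hmemA p hp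
    have hp' : ¬(p.1 = i ∧ p.2 = k) := by
      rintro ⟨e1, e2⟩; rw [e1, e2] at h2; exact absurd hv (not_lt_of_gt h2)
    have hinvol := phi_invol hik p.1 p.2 h1 hp'
    have : p = phi i k (i, k) := by
      calc p = phi i k (phi i k (p.1, p.2)) := by rw [hinvol]
        _ = phi i k (i, k) := by rw [hphi]
    have hcomp : phi i k (i, k) = (k, i) := by
      unfold phi; dsimp only
      rw [if_neg (by rintro ⟨-, h⟩; exact absurd h (lt_irrefl _)),
        if_neg (by rintro ⟨-, h⟩; exact absurd h (lt_irrefl _)),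
        Equiv.swap_apply_left, Equiv.swap_apply_right]
    rw [hcomp] at this
    rw [this] at h1
    exact absurd (hik.trans h1) (lt_irrefl _)
  have hcard : A.card + 1 ≤ B.card := by
    have h1 : (insert (i, k) (A.image (phi i k))).card = A.card + 1 := by
      rw [Finset.card_insert_of_notMem hikimg, Finset.card_image_of_injOn hinj]
    have h2 : insert (i, k) (A.image (phi i k)) ⊆ B := by
      intro q hq
      rcases Finset.mem_insert.mp hq with rfl | hq
      · exact hikB
      · exact hsub hq
    calc A.card + 1 = _ := h1.symm
      _ ≤ B.card := Finset.card_le_card h2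
  simpa [PermLength, hA, hB] using hcard
end swaplen

def cntS (v : Equiv.Perm (Fin m)) (s : Finset (Fin m)) (j : Fin m) : ℕ :=
  (s.filter (fun i' => j ≤ v i')).card

def cnt (v : Equiv.Perm (Fin m)) (i j : Fin m) : ℕ := cntS v (Finset.Iic i) j

lemma Iic_split {i a : Fin m} (h : i ≤ a) :
    Finset.Iic a = Finset.Iio i ∪ Finset.Icc i a := by
  ext z
  simp only [Finset.mem_Iic, Finset.mem_union, Finset.mem_Iio, Finset.mem_Icc]
  constructor
  · intro hz; rcases lt_or_ge z i with h' | h'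
    · exact Or.inl h'
    · exact Or.inr ⟨h', hz⟩
  · rintro (h' | ⟨-, h'⟩)
    · exact le_trans h'.le h
    · exact h'

lemma cntS_union {v : Equiv.Perm (Fin m)} {s t : Finset (Fin m)} (h : Disjoint s t) (j : Fin m) :
    cntS v (s ∪ t) j = cntS v s j + cntS v t j := by
  unfold cntS
  rw [Finset.filter_union, Finset.card_union_of_disjoint (Finset.disjoint_filter_filter h)]

lemma cnt_split {v : Equiv.Perm (Fin m)} {i a : Fin m} (h : i ≤ a) (j : Fin m) :
    cnt v a j = cntS v (Finset.Iio i) j + cntS v (Finset.Icc i a) j := by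
  rw [cnt, Iic_split h, cntS_union]
  simp only [Finset.disjoint_left, Finset.mem_Iio, Finset.mem_Icc]
  intro z hz hz2
  exact absurd hz2.1 (not_le_of_gt hz)

lemma cntS_singleton (v : Equiv.Perm (Fin m)) (i j : Fin m) :
    cntS v {i} j = if j ≤ v i then 1 else 0 := by
  unfold cntS
  rw [Finset.filter_singleton]
  split_ifs <;> simp

lemma cnt_eq_prefix_add {v : Equiv.Perm (Fin m)} (i j : Fin m) :
    cnt v i j = cntS v (Finset.Iio i) j + (if j ≤ v i then 1 else 0) := by
  rw [cnt_split (le_refl i), Finset.Icc_self, cntS_singleton]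

lemma cntS_congr {v v' : Equiv.Perm (Fin m)} {s : Finset (Fin m)} {j j' : Fin m}
    (h : ∀ l ∈ s, (j ≤ v l ↔ j' ≤ v' l)) : cntS v s j = cntS v' s j' := by
  unfold cntS
  congr 1
  exact Finset.filter_congr (by intro l hl; simpa using h l hl)

/-- the key strictness lemma for the chosen transposition -/
lemma key_strict {x w : Equiv.Perm (Fin m)} {i k : Fin m}
    (hdom : ∀ a j, cnt x a j ≤ cnt w a j)
    (hpre : ∀ p, p < i → x p = w p)
    (hik : i < k) (hkw : x k ≤ w i)
    (hmin : ∀ l, i < l → l < k → x i < x l → ¬ (x l ≤ w i))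
    {a j : Fin m} (hia : i ≤ a) (hak : a < k) (hxj : x i < j) (hjk : j ≤ x k) :
    cnt x a j + 1 ≤ cnt w a j := by
  have hwij : j ≤ w i := le_trans hjk hkw
  have hPre : cntS x (Finset.Iio i) j = cntS w (Finset.Iio i) j :=
    cntS_congr (by intro l hl; rw [hpre l (Finset.mem_Iio.mp hl)])
  -- B = #{l ∈ Icc i a : w i < x l}
  have hB : cntS x (Finset.Icc i a) j
      = ((Finset.Icc i a).filter (fun l => w i < x l)).card := by
    unfold cntS
    congr 1
    apply Finset.filter_congr
    intro l hl
    obtain ⟨hil, hla⟩ := Finset.mem_Icc.mp hl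
    constructor
    · intro hjl
      by_contra hcon
      have hxlw : x l ≤ w i := le_of_not_gt hcon
      have hli : i < l := by
        rcases eq_or_lt_of_le hil with rfl | h'
        · exact absurd (lt_of_lt_of_le hxj hjl) (lt_irrefl _)
        · exact h'
      exact hmin l hli (lt_of_le_of_lt hla hak) (lt_of_lt_of_le hxj hjl) hxlw
    · intro hwl
      exact le_of_lt (lt_of_le_of_lt hwij hwl)
  -- B ≤ D via dominance at threshold (w i)+1
  have hBD : ((Finset.Icc i a).filter (fun l => w i < x l)).card
      ≤ ((Finset.Icc i a).filter (fun l => w i < w l)).card := by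
    rcases Nat.lt_or_ge ((w i : ℕ) + 1) m with hm | hm
    · set j' : Fin m := ⟨(w i : ℕ) + 1, hm⟩ with hj'
      have hiff : ∀ u : Fin m, (j' ≤ u ↔ w i < u) := by
        intro u
        rw [Fin.le_def, Fin.lt_def]
        show (w i : ℕ) + 1 ≤ (u : ℕ) ↔ (w i : ℕ) < (u : ℕ)
        omega
      have h1 := hdom a j'
      rw [cnt_split hia, cnt_split hia] at h1
      have h2 : cntS x (Finset.Iio i) j' = cntS w (Finset.Iio i) j' :=
        cntS_congr (by intro l hl; rw [hpre l (Finset.mem_Iio.mp hl)])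
      have h3 : cntS x (Finset.Icc i a) j'
          = ((Finset.Icc i a).filter (fun l => w i < x l)).card := by
        unfold cntS; congr 1
      have h4 : cntS w (Finset.Icc i a) j'
          = ((Finset.Icc i a).filter (fun l => w i < w l)).card := by
        unfold cntS; congr 1
      omega
    · have : ((Finset.Icc i a).filter (fun l => w i < x l)).card = 0 := by
        rw [Finset.card_eq_zero, Finset.filter_eq_empty_iff]
        intro l hl hcon
        have := (x l).isLt
        rw [Fin.lt_def] at hcon
        omega
      omega
  -- w side: cntS w (Icc i a) j ≥ 1 + D
  have hW : ((Finset.Icc i a).filter (fun l => w i < w l)).card + 1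
      ≤ cntS w (Finset.Icc i a) j := by
    unfold cntS
    have hsub : insert i ((Finset.Icc i a).filter (fun l => w i < w l))
        ⊆ (Finset.Icc i a).filter (fun l => j ≤ w l) := by
      intro z hz
      rcases Finset.mem_insert.mp hz with rfl | hz
      · exact Finset.mem_filter.mpr ⟨Finset.mem_Icc.mpr ⟨le_refl _, hia⟩, hwij⟩
      · obtain ⟨hz1, hz2⟩ := Finset.mem_filter.mp hz
        exact Finset.mem_filter.mpr ⟨hz1, le_of_lt (lt_of_le_of_lt hwij hz2)⟩
    have hni : i ∉ (Finset.Icc i a).filter (fun l => w i < w l) := by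
      simp [Finset.mem_filter]
    calc ((Finset.Icc i a).filter (fun l => w i < w l)).card + 1
        = (insert i ((Finset.Icc i a).filter (fun l => w i < w l))).card := by
          rw [Finset.card_insert_of_notMem hni]
      _ ≤ _ := Finset.card_le_card hsub
  have e1 := cnt_split (v := x) hia j
  have e2 := cnt_split (v := w) hia j
  omega

lemma cnt_card_sum (v : Equiv.Perm (Fin m)) (a j : Fin m) :
    cnt v a j = ∑ l ∈ Finset.Iic a, (if j ≤ v l then 1 else 0) := by
  rw [cnt, cntS, Finset.card_filter]

lemma cnt_mul_swap {x : Equiv.Perm (Fin m)} {i k : Fin m} (hik : i < k) (hxik : x i < x k)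
    (a j : Fin m) :
    cnt (x * Equiv.swap i k) a j =
      cnt x a j + (if i ≤ a ∧ a < k ∧ x i < j ∧ j ≤ x k then 1 else 0) := by
  have hxi : (x * Equiv.swap i k) i = x k := by simp [Equiv.Perm.mul_apply]
  have hxk : (x * Equiv.swap i k) k = x i := by simp [Equiv.Perm.mul_apply]
  have hxo : ∀ c : Fin m, c ≠ i → c ≠ k → (x * Equiv.swap i k) c = x c := by
    intro c h1 h2; simp [Equiv.Perm.mul_apply, Equiv.swap_apply_of_ne_of_ne h1 h2]
  rcases lt_or_ge a i with hai | hia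
  · -- a < i : no change
    rw [if_neg (by rintro ⟨h, -⟩; exact absurd (lt_of_lt_of_le hai h) (lt_irrefl _))]
    rw [cnt, cnt]
    apply cntS_congr
    intro l hl
    have hl' := Finset.mem_Iic.mp hl
    rw [hxo l (ne_of_lt (lt_of_le_of_lt hl' hai)) (ne_of_lt (lt_of_le_of_lt hl' (hai.trans hik)))]
  · rcases lt_or_ge a k with hak | hka
    · -- i ≤ a < k
      have hiI : i ∈ Finset.Iic a := Finset.mem_Iic.mpr hia
      have e1 : cnt (x * Equiv.swap i k) a j
          = (∑ l ∈ (Finset.Iic a).erase i, (if j ≤ x l then 1 else 0))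
            + (if j ≤ x k then 1 else 0) := by
        rw [cnt_card_sum, ← Finset.sum_erase_add _ _ hiI, hxi]
        congr 1
        apply Finset.sum_congr rfl
        intro l hl
        have h1 := Finset.ne_of_mem_erase hl
        have h2 := Finset.mem_Iic.mp (Finset.mem_of_mem_erase hl)
        rw [hxo l h1 (ne_of_lt (lt_of_le_of_lt h2 hak))]
      have e2 : cnt x a j
          = (∑ l ∈ (Finset.Iic a).erase i, (if j ≤ x l then 1 else 0))
            + (if j ≤ x i then 1 else 0) := by
        rw [cnt_card_sum, ← Finset.sum_erase_add _ _ hiI]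
      rw [e1, e2]
      have hcond : (i ≤ a ∧ a < k ∧ x i < j ∧ j ≤ x k) ↔ (x i < j ∧ j ≤ x k) := by
        constructor
        · rintro ⟨-, -, h1, h2⟩; exact ⟨h1, h2⟩
        · intro h; exact ⟨hia, hak, h.1, h.2⟩
      rw [if_congr hcond rfl rfl]
      rcases le_or_gt j (x i) with h1 | h1
      · rw [if_pos h1, if_pos (h1.trans (le_of_lt hxik)),
          if_neg (by rintro ⟨h2, -⟩; exact absurd (lt_of_lt_of_le h2 h1) (lt_irrefl _))]
      · rw [if_neg (not_le_of_gt h1)]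
        rcases le_or_gt j (x k) with h2 | h2
        · rw [if_pos h2, if_pos ⟨h1, h2⟩]
        · rw [if_neg (not_le_of_gt h2), if_neg (by rintro ⟨-, h3⟩; exact absurd (lt_of_lt_of_le h2 h3) (lt_irrefl _))]
    · -- k ≤ a : reindex by swap
      rw [if_neg (by rintro ⟨-, h, -⟩; exact absurd (lt_of_lt_of_le h hka) (lt_irrefl _))]
      rw [cnt_card_sum, cnt_card_sum, Nat.add_zero]
      apply Finset.sum_equiv (Equiv.swap i k)
      · intro l
        simp only [Finset.mem_Iic]
        rcases eq_or_ne l i with rfl | h1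
        · rw [Equiv.swap_apply_left]
          constructor
          · intro _; exact hka
          · intro _; exact le_trans (le_of_lt hik) hka
        · rcases eq_or_ne l k with rfl | h2
          · rw [Equiv.swap_apply_right]
            constructor
            · intro _; exact le_trans (le_of_lt hik) hka
            · intro _; exact hka
          · rw [Equiv.swap_apply_of_ne_of_ne h1 h2]
      · intro l hl
        rw [Equiv.Perm.mul_apply]



lemma bruhat_of_dom {m : ℕ} (w : Equiv.Perm (Fin m)) :
    ∀ N : ℕ, ∀ x : Equiv.Perm (Fin m), (∑ a : Fin m, ∑ j : Fin m, (cnt w a j - cnt x a j)) = N →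
      (∀ a j, cnt x a j ≤ cnt w a j) → BruhatLE x w := by
  intro N
  induction N using Nat.strong_induction_on with
  | _ N ih =>
    intro x hN hdom
    by_cases hxw : x = w
    · subst hxw; exact Relation.ReflTransGen.refl
    · have hSne : (Finset.univ.filter (fun p : Fin m => x p ≠ w p)).Nonempty := by
        have h : ∃ p, x p ≠ w p := by
          by_contra h; push_neg at h; exact hxw (Equiv.ext h)
        obtain ⟨p, hp⟩ := h
        exact ⟨p, Finset.mem_filter.mpr ⟨Finset.mem_univ _, hp⟩⟩
      set S := Finset.univ.filter (fun p : Fin m => x p ≠ w p) with hS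
      set i := S.min' hSne with hi
      have hiS : x i ≠ w i := (Finset.mem_filter.mp (S.min'_mem hSne)).2
      have hpre : ∀ p, p < i → x p = w p := by
        intro p hp
        by_contra h
        have : i ≤ p := S.min'_le p (Finset.mem_filter.mpr ⟨Finset.mem_univ _, h⟩)
        exact absurd hp (not_lt_of_ge this)
      have hxiwi : x i < w i := by
        have h1 := hdom i (x i)
        rw [cnt_eq_prefix_add, cnt_eq_prefix_add] at h1
        have h2 : cntS x (Finset.Iio i) (x i) = cntS w (Finset.Iio i) (x i) :=
          cntS_congr (fun l hl => by rw [hpre l (Finset.mem_Iio.mp hl)])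
        rw [h2, if_pos (le_refl _)] at h1
        have h3 : x i ≤ w i := by
          by_contra h
          rw [if_neg h] at h1
          omega
        exact lt_of_le_of_ne h3 hiS
      have hTne : (Finset.univ.filter
          (fun l : Fin m => i < l ∧ x i < x l ∧ x l ≤ w i)).Nonempty := by
        refine ⟨x.symm (w i), Finset.mem_filter.mpr ⟨Finset.mem_univ _, ?_, ?_, ?_⟩⟩
        · rcases lt_trichotomy (x.symm (w i)) i with h | h | h
          · exfalso
            have h2 := hpre _ h
            have h3 : x (x.symm (w i)) = w i := x.apply_symm_apply _
            have h4 : w (x.symm (w i)) = w i := by rw [← h2]; exact h3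
            have h5 : x.symm (w i) = i := w.injective h4
            rw [h5] at h
            exact absurd h (lt_irrefl _)
          · exfalso
            have h3 : x (x.symm (w i)) = w i := x.apply_symm_apply _
            rw [h] at h3
            exact hiS h3
          · exact h
        · rw [x.apply_symm_apply]; exact hxiwi
        · rw [x.apply_symm_apply]
      set T := Finset.univ.filter (fun l : Fin m => i < l ∧ x i < x l ∧ x l ≤ w i) with hT
      set k := T.min' hTne with hk
      obtain ⟨-, hik, hxixk, hxkwi⟩ := Finset.mem_filter.mp (T.min'_mem hTne)
      have hmin : ∀ l, i < l → l < k → x i < x l → ¬(x l ≤ w i) := by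
        intro l h1 h2 h3 h4
        have : k ≤ l := T.min'_le l (Finset.mem_filter.mpr ⟨Finset.mem_univ _, h1, h3, h4⟩)
        exact absurd h2 (not_lt_of_ge this)
      have hdom' : ∀ a j, cnt (x * Equiv.swap i k) a j ≤ cnt w a j := by
        intro a j
        rw [cnt_mul_swap hik hxixk]
        split_ifs with h
        · exact key_strict hdom hpre hik hxkwi hmin h.1 h.2.1 h.2.2.1 h.2.2.2
        · rw [Nat.add_zero]; exact hdom a j
      have hstrict : cnt x i (x k) + 1 ≤ cnt w i (x k) :=
        key_strict hdom hpre hik hxkwi hmin (le_refl i) hik hxixk (le_refl _)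
      have hcnt' : cnt (x * Equiv.swap i k) i (x k) = cnt x i (x k) + 1 := by
        rw [cnt_mul_swap hik hxixk, if_pos ⟨le_refl _, hik, hxixk, le_refl _⟩]
      have hcle : ∀ a j, cnt x a j ≤ cnt (x * Equiv.swap i k) a j := by
        intro a j
        rw [cnt_mul_swap hik hxixk]
        exact Nat.le_add_right _ _
      have hNlt : (∑ a : Fin m, ∑ j : Fin m, (cnt w a j - cnt (x * Equiv.swap i k) a j)) < N := by
        rw [← hN]
        apply Finset.sum_lt_sum
        · intro a _
          apply Finset.sum_le_sum
          intro j _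
          have := hcle a j
          omega
        · refine ⟨i, Finset.mem_univ _, ?_⟩
          apply Finset.sum_lt_sum
          · intro j _
            have := hcle i j
            omega
          · refine ⟨x k, Finset.mem_univ _, ?_⟩
            have h2 := hcnt'
            omega
      have hlen : PermLength x < PermLength (x * Equiv.swap i k) :=
        permLength_lt_mul_swap hik hxixk
      refine Relation.ReflTransGen.head
        ⟨hlen, Equiv.swap (x i) (x k), ⟨x i, x k, ne_of_lt hxixk, rfl⟩, ?_⟩
        (ih _ hNlt (x * Equiv.swap i k) rfl hdom')
      exact Equiv.mul_swap_eq_swap_mul x i k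

lemma cnt_card_sum' (v : Equiv.Perm (Fin m)) (a j : Fin m) :
    cnt v a j = ∑ l ∈ Finset.Iic a, (if j ≤ v l then 1 else 0) := by
  rw [cnt, cntS, Finset.card_filter]

lemma cnt_succ_i (v : Equiv.Perm (Fin m)) {i : Fin m} (hi : (i : ℕ) + 1 < m) (j : Fin m) :
    cnt v ⟨(i : ℕ) + 1, hi⟩ j = cnt v i j + (if j ≤ v ⟨(i : ℕ) + 1, hi⟩ then 1 else 0) := by
  have hIic : Finset.Iic (⟨(i : ℕ) + 1, hi⟩ : Fin m) = insert ⟨(i : ℕ) + 1, hi⟩ (Finset.Iic i) := by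
    ext z
    simp only [Finset.mem_Iic, Finset.mem_insert, Fin.le_def, Fin.ext_iff]
    omega
  have hnot : (⟨(i : ℕ) + 1, hi⟩ : Fin m) ∉ Finset.Iic i := by
    simp only [Finset.mem_Iic, Fin.le_def]
    omega
  rw [cnt_card_sum', cnt_card_sum', hIic, Finset.sum_insert hnot]
  ring

lemma cnt_bot (v : Equiv.Perm (Fin m)) {i : Fin m} (hi : (i : ℕ) = 0) (j : Fin m) :
    cnt v i j = if j ≤ v i then 1 else 0 := by
  have hIic : Finset.Iic i = {i} := by
    ext z
    simp only [Finset.mem_Iic, Finset.mem_singleton, Fin.le_def, Fin.ext_iff]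
    omega
  rw [cnt_card_sum', hIic, Finset.sum_singleton]

lemma cnt_le_one_bot (v : Equiv.Perm (Fin m)) {i : Fin m} (hi : (i : ℕ) = 0) (j : Fin m) :
    cnt v i j ≤ 1 := by
  rw [cnt_bot v hi]
  split_ifs <;> omega

lemma cnt_succ_j (v : Equiv.Perm (Fin m)) (i : Fin m) {j : Fin m} (hj : (j : ℕ) + 1 < m) :
    cnt v i j = cnt v i ⟨(j : ℕ) + 1, hj⟩ + (if v.symm j ≤ i then 1 else 0) := by
  rw [cnt_card_sum', cnt_card_sum']
  have key : ∀ l ∈ Finset.Iic i,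
      (if j ≤ v l then (1:ℕ) else 0)
        = (if (⟨(j : ℕ) + 1, hj⟩ : Fin m) ≤ v l then 1 else 0) + (if l = v.symm j then 1 else 0) := by
    intro l _
    by_cases he : l = v.symm j
    · have : v l = j := by rw [he, v.apply_symm_apply]
      rw [if_pos he, if_pos (le_of_eq this.symm), if_neg (by rw [this, Fin.le_def]; show ¬((j:ℕ)+1 ≤ (j:ℕ)); omega)]
    · have hne : v l ≠ j := by
        intro h; exact he (by rw [← h, v.symm_apply_apply])
      rw [if_neg he]
      have : ((⟨(j : ℕ) + 1, hj⟩ : Fin m) ≤ v l) ↔ (j ≤ v l) := by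
        rw [Fin.le_def, Fin.le_def]
        have := Fin.val_ne_iff.mpr hne
        simp only []
        omega
      rw [if_congr this rfl rfl]
      omega
  rw [Finset.sum_congr rfl key, Finset.sum_add_distrib]
  congr 1
  rw [Finset.sum_ite_eq' (Finset.Iic i) (v.symm j) (fun _ => (1:ℕ))]
  simp [Finset.mem_Iic]

lemma cnt_top_j (v : Equiv.Perm (Fin m)) (i : Fin m) {j : Fin m} (hj : (j : ℕ) + 1 = m) :
    cnt v i j = if v.symm j ≤ i then 1 else 0 := by
  rw [cnt_card_sum']
  have key : ∀ l ∈ Finset.Iic i,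
      (if j ≤ v l then (1:ℕ) else 0) = (if l = v.symm j then 1 else 0) := by
    intro l _
    by_cases he : l = v.symm j
    · have : v l = j := by rw [he, v.apply_symm_apply]
      rw [if_pos he, if_pos (le_of_eq this.symm)]
    · have hne : v l ≠ j := by
        intro h; exact he (by rw [← h, v.symm_apply_apply])
      rw [if_neg he, if_neg]
      intro hcon
      rw [Fin.le_def] at hcon
      have h2 := (v l).isLt
      have h3 := Fin.val_ne_iff.mpr hne
      omega
  rw [Finset.sum_congr rfl key,
    Finset.sum_ite_eq' (Finset.Iic i) (v.symm j) (fun _ => (1:ℕ))]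
  simp [Finset.mem_Iic]

def LamB (lam : Fin m → ℤ) (i : Fin m) : Prop :=
  ∀ h : (i : ℕ) + 1 < m, lam i < lam ⟨(i : ℕ) + 1, h⟩

def MuB (mu : Fin m → ℤ) (j : Fin m) : Prop :=
  ∀ _ : 0 < (j : ℕ), mu ⟨(j : ℕ) - 1, Nat.lt_of_le_of_lt (Nat.sub_le _ _) j.isLt⟩ < mu j

section moving
variable {lam mu : Fin m → ℤ} {x w : Equiv.Perm (Fin m)}

lemma moveL (hlam : Monotone lam)
    (Hd1 : ∀ (i1 : Fin m) (h : (i1 : ℕ) + 1 < m),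
      lam i1 = lam ⟨(i1 : ℕ) + 1, h⟩ → w ⟨(i1 : ℕ) + 1, h⟩ < w i1)
    (j : Fin m) :
    ∀ (n : ℕ) (i : Fin m), (i : ℕ) = n →
      ∀ h1 : (i : ℕ) + 1 < m, lam i = lam ⟨(i : ℕ) + 1, h1⟩ → j ≤ w ⟨(i : ℕ) + 1, h1⟩ →
      cnt w i j < cnt x i j →
      ∃ i' : Fin m, cnt w i' j < cnt x i' j ∧ LamB lam i' := by
  intro n
  induction n using Nat.strong_induction_on with
  | _ n ih =>
    intro i hin h1 heq hjw hd
    have hwd := Hd1 i h1 heq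
    have hjwi : j ≤ w i := le_of_lt (lt_of_le_of_lt hjw hwd)
    rcases Nat.eq_zero_or_pos (i : ℕ) with hz | hpos
    · exfalso
      have e1 := cnt_bot w hz j
      have e2 := cnt_le_one_bot x hz j
      rw [if_pos hjwi] at e1
      omega
    · have hsub : (i : ℕ) - 1 < m := by omega
      have hi0 : ((⟨(i : ℕ) - 1, hsub⟩ : Fin m) : ℕ) + 1 < m := by
        show (i : ℕ) - 1 + 1 < m
        omega
      have hieq : (⟨((⟨(i : ℕ) - 1, hsub⟩ : Fin m) : ℕ) + 1, hi0⟩ : Fin m) = i := by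
        apply Fin.ext
        show (i : ℕ) - 1 + 1 = (i : ℕ)
        omega
      have e1 := cnt_succ_i w hi0 j
      have e2 := cnt_succ_i x hi0 j
      rw [hieq] at e1 e2
      rw [if_pos hjwi] at e1
      have hd0 : cnt w ⟨(i : ℕ) - 1, hsub⟩ j < cnt x ⟨(i : ℕ) - 1, hsub⟩ j := by
        have hx : cnt x i j ≤ cnt x ⟨(i : ℕ) - 1, hsub⟩ j + 1 := by
          rw [e2]; split_ifs <;> omega
        omega
      by_cases hb : lam ⟨(i : ℕ) - 1, hsub⟩ < lam i
      · refine ⟨⟨(i : ℕ) - 1, hsub⟩, hd0, ?_⟩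
        intro h
        have hmk : (⟨((⟨(i : ℕ) - 1, hsub⟩ : Fin m) : ℕ) + 1, h⟩ : Fin m) = i := by
          apply Fin.ext
          show (i : ℕ) - 1 + 1 = (i : ℕ)
          omega
        rw [hmk]
        exact hb
      · have hle : lam ⟨(i : ℕ) - 1, hsub⟩ ≤ lam i := by
          apply hlam
          rw [Fin.le_def]
          show (i : ℕ) - 1 ≤ (i : ℕ)
          omega
        have heq0 : lam ⟨(i : ℕ) - 1, hsub⟩ = lam i := le_antisymm hle (le_of_not_gt hb)
        refine ih ((i : ℕ) - 1) (by omega) ⟨(i : ℕ) - 1, hsub⟩ rfl hi0 ?_ ?_ hd0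
        · rw [hieq]; exact heq0
        · rw [hieq]; exact hjwi

lemma moveR (hlam : Monotone lam)
    (Hd1 : ∀ (i1 : Fin m) (h : (i1 : ℕ) + 1 < m),
      lam i1 = lam ⟨(i1 : ℕ) + 1, h⟩ → w ⟨(i1 : ℕ) + 1, h⟩ < w i1)
    (j : Fin m) :
    ∀ (n : ℕ) (i : Fin m), m - (i : ℕ) = n →
      cnt w i j < cnt x i j →
      ∃ i' : Fin m, cnt w i' j < cnt x i' j ∧ LamB lam i' := by
  intro n
  induction n using Nat.strong_induction_on with
  | _ n ih =>
    intro i hin hd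
    by_cases hP : (i : ℕ) + 1 < m
    · by_cases hb : lam i < lam ⟨(i : ℕ) + 1, hP⟩
      · exact ⟨i, hd, fun h => hb⟩
      · have heq : lam i = lam ⟨(i : ℕ) + 1, hP⟩ := by
          refine le_antisymm ?_ (le_of_not_gt hb)
          apply hlam
          rw [Fin.le_def]
          show (i : ℕ) ≤ (i : ℕ) + 1
          omega
        by_cases hj : j ≤ w ⟨(i : ℕ) + 1, hP⟩
        · exact moveL hlam Hd1 j (i : ℕ) i rfl hP heq hj hd
        · have e1 := cnt_succ_i w hP j
          have e2 := cnt_succ_i x hP j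
          rw [if_neg hj] at e1
          have hd1 : cnt w ⟨(i : ℕ) + 1, hP⟩ j < cnt x ⟨(i : ℕ) + 1, hP⟩ j := by
            have : cnt x i j ≤ cnt x ⟨(i : ℕ) + 1, hP⟩ j := by
              rw [e2]; split_ifs <;> omega
            omega
          exact ih (m - ((i : ℕ) + 1)) (by omega) ⟨(i : ℕ) + 1, hP⟩ rfl hd1
    · exact ⟨i, hd, fun h => absurd h hP⟩

lemma moveUp (hmu : Monotone mu)
    (Hd2 : ∀ (j1 : Fin m) (h : (j1 : ℕ) + 1 < m),
      mu j1 = mu ⟨(j1 : ℕ) + 1, h⟩ → w.symm ⟨(j1 : ℕ) + 1, h⟩ < w.symm j1)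
    (i : Fin m) :
    ∀ (n : ℕ) (j : Fin m), m - (j : ℕ) = n →
      ∀ (hpos : 0 < (j : ℕ)) (hsub : (j : ℕ) - 1 < m),
      mu ⟨(j : ℕ) - 1, hsub⟩ = mu j → w.symm ⟨(j : ℕ) - 1, hsub⟩ ≤ i →
      cnt w i j < cnt x i j →
      ∃ j' : Fin m, cnt w i j' < cnt x i j' ∧ MuB mu j' := by
  intro n
  induction n using Nat.strong_induction_on with
  | _ n ih =>
    intro j hjn hpos hsub heq hwle hd
    have hj0 : ((⟨(j : ℕ) - 1, hsub⟩ : Fin m) : ℕ) + 1 < m := by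
      show (j : ℕ) - 1 + 1 < m
      omega
    have hjeq : (⟨((⟨(j : ℕ) - 1, hsub⟩ : Fin m) : ℕ) + 1, hj0⟩ : Fin m) = j := by
      apply Fin.ext
      show (j : ℕ) - 1 + 1 = (j : ℕ)
      omega
    have hsym : w.symm j < w.symm ⟨(j : ℕ) - 1, hsub⟩ := by
      have := Hd2 ⟨(j : ℕ) - 1, hsub⟩ hj0 (by rw [hjeq]; exact heq)
      rw [hjeq] at this
      exact this
    have hwj : w.symm j ≤ i := le_of_lt (lt_of_lt_of_le hsym hwle)
    rcases Nat.lt_or_ge ((j : ℕ) + 1) m with hm | hm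
    · have e1 := cnt_succ_j w i hm
      have e2 := cnt_succ_j x i hm
      rw [if_pos hwj] at e1
      have hd1 : cnt w i ⟨(j : ℕ) + 1, hm⟩ < cnt x i ⟨(j : ℕ) + 1, hm⟩ := by
        have : cnt x i j ≤ cnt x i ⟨(j : ℕ) + 1, hm⟩ + 1 := by
          rw [e2]; split_ifs <;> omega
        omega
      have hpos1 : 0 < ((⟨(j : ℕ) + 1, hm⟩ : Fin m) : ℕ) := by
        show 0 < (j : ℕ) + 1
        omega
      have hsub1 : ((⟨(j : ℕ) + 1, hm⟩ : Fin m) : ℕ) - 1 < m := by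
        show (j : ℕ) + 1 - 1 < m
        omega
      have hmk : (⟨((⟨(j : ℕ) + 1, hm⟩ : Fin m) : ℕ) - 1, hsub1⟩ : Fin m) = j := by
        apply Fin.ext
        show (j : ℕ) + 1 - 1 = (j : ℕ)
        omega
      by_cases hb : mu j < mu ⟨(j : ℕ) + 1, hm⟩
      · refine ⟨⟨(j : ℕ) + 1, hm⟩, hd1, ?_⟩
        intro h
        have hmk' : (⟨((⟨(j : ℕ) + 1, hm⟩ : Fin m) : ℕ) - 1, by omega⟩ : Fin m) = j := by
          apply Fin.ext
          show (j : ℕ) + 1 - 1 = (j : ℕ)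
          omega
        rw [hmk']
        exact hb
      · have heq1 : mu j = mu ⟨(j : ℕ) + 1, hm⟩ := by
          refine le_antisymm ?_ (le_of_not_gt hb)
          apply hmu
          rw [Fin.le_def]
          show (j : ℕ) ≤ (j : ℕ) + 1
          omega
        refine ih (m - ((j : ℕ) + 1)) (by omega) ⟨(j : ℕ) + 1, hm⟩ rfl hpos1 hsub1 ?_ ?_ hd1
        · rw [hmk]; exact heq1
        · rw [hmk]; exact hwj
    · exfalso
      have hm' : (j : ℕ) + 1 = m := by omega
      have e1 := cnt_top_j w i hm'
      have e2 := cnt_top_j x i hm'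
      rw [if_pos hwj] at e1
      have : cnt x i j ≤ 1 := by rw [e2]; split_ifs <;> omega
      omega

lemma moveDown (hmu : Monotone mu)
    (Hd2 : ∀ (j1 : Fin m) (h : (j1 : ℕ) + 1 < m),
      mu j1 = mu ⟨(j1 : ℕ) + 1, h⟩ → w.symm ⟨(j1 : ℕ) + 1, h⟩ < w.symm j1)
    (i : Fin m) :
    ∀ (n : ℕ) (j : Fin m), (j : ℕ) = n →
      ∀ (hpos : 0 < (j : ℕ)) (hsub : (j : ℕ) - 1 < m),
      mu ⟨(j : ℕ) - 1, hsub⟩ = mu j → ¬(w.symm ⟨(j : ℕ) - 1, hsub⟩ ≤ i) →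
      cnt w i j < cnt x i j →
      ∃ j' : Fin m, cnt w i j' < cnt x i j' ∧ MuB mu j' := by
  intro n
  induction n using Nat.strong_induction_on with
  | _ n ih =>
    intro j hjn hpos hsub heq hwnle hd
    have hj0 : ((⟨(j : ℕ) - 1, hsub⟩ : Fin m) : ℕ) + 1 < m := by
      show (j : ℕ) - 1 + 1 < m
      omega
    have hjeq : (⟨((⟨(j : ℕ) - 1, hsub⟩ : Fin m) : ℕ) + 1, hj0⟩ : Fin m) = j := by
      apply Fin.ext
      show (j : ℕ) - 1 + 1 = (j : ℕ)
      omega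
    have e1 := cnt_succ_j w i hj0
    have e2 := cnt_succ_j x i hj0
    rw [hjeq] at e1 e2
    rw [if_neg hwnle] at e1
    have hd0 : cnt w i ⟨(j : ℕ) - 1, hsub⟩ < cnt x i ⟨(j : ℕ) - 1, hsub⟩ := by
      have : cnt x i j ≤ cnt x i ⟨(j : ℕ) - 1, hsub⟩ := by
        rw [e2]; split_ifs <;> omega
      omega
    by_cases hz : (j : ℕ) - 1 = 0
    · refine ⟨⟨(j : ℕ) - 1, hsub⟩, hd0, ?_⟩
      intro h
      exfalso
      revert h
      show ¬ (0 < (j : ℕ) - 1)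
      omega
    · have hsub0 : ((⟨(j : ℕ) - 1, hsub⟩ : Fin m) : ℕ) - 1 < m := by
        show (j : ℕ) - 1 - 1 < m
        omega
      by_cases hb : mu ⟨((⟨(j : ℕ) - 1, hsub⟩ : Fin m) : ℕ) - 1, hsub0⟩ < mu ⟨(j : ℕ) - 1, hsub⟩
      · refine ⟨⟨(j : ℕ) - 1, hsub⟩, hd0, fun _ => ?_⟩
        exact hb
      · have heq0 : mu ⟨((⟨(j : ℕ) - 1, hsub⟩ : Fin m) : ℕ) - 1, hsub0⟩ = mu ⟨(j : ℕ) - 1, hsub⟩ := by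
          refine le_antisymm ?_ (le_of_not_gt hb)
          apply hmu
          rw [Fin.le_def]
          show (j : ℕ) - 1 - 1 ≤ (j : ℕ) - 1
          omega
        have hj00 : ((⟨((⟨(j : ℕ) - 1, hsub⟩ : Fin m) : ℕ) - 1, hsub0⟩ : Fin m) : ℕ) + 1 < m := by
          show (j : ℕ) - 1 - 1 + 1 < m
          omega
        have hjeq0 : (⟨((⟨((⟨(j : ℕ) - 1, hsub⟩ : Fin m) : ℕ) - 1, hsub0⟩ : Fin m) : ℕ) + 1, hj00⟩ : Fin m)
            = ⟨(j : ℕ) - 1, hsub⟩ := by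
          apply Fin.ext
          show (j : ℕ) - 1 - 1 + 1 = (j : ℕ) - 1
          omega
        have hs := Hd2 ⟨((⟨(j : ℕ) - 1, hsub⟩ : Fin m) : ℕ) - 1, hsub0⟩ hj00 (by rw [hjeq0]; exact heq0)
        rw [hjeq0] at hs
        have hnle0 : ¬(w.symm ⟨((⟨(j : ℕ) - 1, hsub⟩ : Fin m) : ℕ) - 1, hsub0⟩ ≤ i) := by
          intro hcon
          exact hwnle (le_of_lt (lt_of_lt_of_le hs hcon))
        refine ih ((j : ℕ) - 1) (by omega) ⟨(j : ℕ) - 1, hsub⟩ rfl (by show 0 < (j : ℕ) - 1; omega) hsub0 heq0 hnle0 hd0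
end moving


section descent
variable {lam mu : Fin m → ℤ} {w : Equiv.Perm (Fin m)}

lemma desc1 (hw : MaxInDoubleCoset lam mu w) :
    ∀ (i1 : Fin m) (h : (i1 : ℕ) + 1 < m),
      lam i1 = lam ⟨(i1 : ℕ) + 1, h⟩ → w ⟨(i1 : ℕ) + 1, h⟩ < w i1 := by
  intro i1 h heq
  have hlt12 : i1 < (⟨(i1 : ℕ) + 1, h⟩ : Fin m) := by
    rw [Fin.lt_def]
    show (i1 : ℕ) < (i1 : ℕ) + 1
    omega
  have hne : w ⟨(i1 : ℕ) + 1, h⟩ ≠ w i1 := by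
    intro hcon
    have := w.injective hcon
    rw [this] at hlt12
    exact absurd hlt12 (lt_irrefl _)
  rcases lt_or_gt_of_ne hne with hlt | hgt
  · exact hlt
  · exfalso
    have hv : ∀ p, lam (Equiv.swap i1 ⟨(i1 : ℕ) + 1, h⟩ p) = lam p := by
      intro p
      rcases eq_or_ne p i1 with rfl | h1
      · rw [Equiv.swap_apply_left]; exact heq.symm
      · rcases eq_or_ne p ⟨(i1 : ℕ) + 1, h⟩ with rfl | h2
        · rw [Equiv.swap_apply_right]; exact heq
        · rw [Equiv.swap_apply_of_ne_of_ne h1 h2]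
    have hmax := hw 1 (Equiv.swap i1 ⟨(i1 : ℕ) + 1, h⟩) (fun p => rfl) hv
    rw [one_mul] at hmax
    have := permLength_lt_mul_swap (x := w) hlt12 hgt
    omega

lemma desc2 (hw : MaxInDoubleCoset lam mu w) :
    ∀ (j1 : Fin m) (h : (j1 : ℕ) + 1 < m),
      mu j1 = mu ⟨(j1 : ℕ) + 1, h⟩ → w.symm ⟨(j1 : ℕ) + 1, h⟩ < w.symm j1 := by
  intro j1 h heq
  have hlt12 : j1 < (⟨(j1 : ℕ) + 1, h⟩ : Fin m) := by
    rw [Fin.lt_def]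
    show (j1 : ℕ) < (j1 : ℕ) + 1
    omega
  have hne : w.symm ⟨(j1 : ℕ) + 1, h⟩ ≠ w.symm j1 := by
    intro hcon
    have := w.symm.injective hcon
    rw [this] at hlt12
    exact absurd hlt12 (lt_irrefl _)
  rcases lt_or_gt_of_ne hne with hlt | hgt
  · exact hlt
  · exfalso
    have hu : ∀ p, mu (Equiv.swap j1 ⟨(j1 : ℕ) + 1, h⟩ p) = mu p := by
      intro p
      rcases eq_or_ne p j1 with rfl | h1
      · rw [Equiv.swap_apply_left]; exact heq.symm
      · rcases eq_or_ne p ⟨(j1 : ℕ) + 1, h⟩ with rfl | h2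
        · rw [Equiv.swap_apply_right]; exact heq
        · rw [Equiv.swap_apply_of_ne_of_ne h1 h2]
    have hmax := hw (Equiv.swap j1 ⟨(j1 : ℕ) + 1, h⟩) 1 hu (fun p => rfl)
    rw [mul_one] at hmax
    have hrw : Equiv.swap j1 ⟨(j1 : ℕ) + 1, h⟩ * w
        = w * Equiv.swap (w.symm j1) (w.symm ⟨(j1 : ℕ) + 1, h⟩) := by
      rw [Equiv.mul_swap_eq_swap_mul, w.apply_symm_apply, w.apply_symm_apply]
    have hvals : w (w.symm j1) < w (w.symm ⟨(j1 : ℕ) + 1, h⟩) := by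
      rw [w.apply_symm_apply, w.apply_symm_apply]
      exact hlt12
    have := permLength_lt_mul_swap (x := w) hgt hvals
    rw [← hrw] at this
    omega
end descent

lemma cnt_univ_eq (v : Equiv.Perm (Fin m)) (i j : Fin m) :
    (Finset.univ.filter (fun i' : Fin m => i' ≤ i ∧ j ≤ v i')).card = cnt v i j := by
  rw [cnt, cntS]
  congr 1
  ext l
  simp [Finset.mem_Iic]

/-- Lemma 6.2: if `x ≰ w` in the Bruhat order, with both `x, w` longest
double-coset representatives for weakly increasing `λ, μ`, then there is an
admissible pair `(i, j)` located at block boundaries of `λ` and `μ`.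
(Zero-based: the one-based condition `μ_{j-1} < μ_j` or `j = 1` becomes
`μ_{j-1} < μ_j` or `j = 0`.) -/
theorem stmt5 {m : ℕ} (lam mu : Fin m → ℤ) (hlam : Monotone lam) (hmu : Monotone mu)
    (x w : Equiv.Perm (Fin m))
    (hx : MaxInDoubleCoset lam mu x) (hw : MaxInDoubleCoset lam mu w)
    (hnle : ¬ BruhatLE x w) :
    ∃ i j : Fin m,
      (Finset.univ.filter (fun i' : Fin m => i' ≤ i ∧ j ≤ w i')).card <
        (Finset.univ.filter (fun i' : Fin m => i' ≤ i ∧ j ≤ x i')).card ∧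
      (∀ h : (i : ℕ) + 1 < m, lam i < lam ⟨(i : ℕ) + 1, h⟩) ∧
      (∀ _ : 0 < (j : ℕ), mu ⟨(j : ℕ) - 1, by omega⟩ < mu j) := by
  classical
  have hd1 := desc1 hw
  have hd2 := desc2 hw
  -- dominance must fail
  have hvio : ∃ a j : Fin m, cnt w a j < cnt x a j := by
    by_contra hcon
    push_neg at hcon
    exact hnle (bruhat_of_dom w _ x rfl (fun a j => hcon a j))
  obtain ⟨a, j, haj⟩ := hvio
  -- move a to a λ-block boundary
  obtain ⟨i', hdI, hLamB⟩ := moveR hlam hd1 j (m - (a : ℕ)) a rfl haj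
  -- move j to a μ-block boundary
  have hJ : ∃ j' : Fin m, cnt w i' j' < cnt x i' j' ∧ MuB mu j' := by
    by_cases hMuB : MuB mu j
    · exact ⟨j, hdI, hMuB⟩
    · rw [MuB, not_forall] at hMuB
      obtain ⟨hpos, hnlt⟩ := hMuB
      have hsub : (j : ℕ) - 1 < m := by omega
      have heq : mu ⟨(j : ℕ) - 1, hsub⟩ = mu j := by
        refine le_antisymm ?_ (le_of_not_gt hnlt)
        apply hmu
        rw [Fin.le_def]
        show (j : ℕ) - 1 ≤ (j : ℕ)
        omega
      by_cases hle : w.symm ⟨(j : ℕ) - 1, hsub⟩ ≤ i'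
      · exact moveUp hmu hd2 i' (m - (j : ℕ)) j rfl hpos hsub heq hle hdI
      · exact moveDown hmu hd2 i' (j : ℕ) j rfl hpos hsub heq hle hdI
  obtain ⟨j', hdJ, hMuB'⟩ := hJ
  refine ⟨i', j', ?_, hLamB, hMuB'⟩
  rw [cnt_univ_eq, cnt_univ_eq]
  exact hdJ
end

section
/- The number of permutations in S_n avoiding both the pattern 321 and the pattern 3412 equals the Fibonacci number F_{2n−1}, where F_1 = F_2 = 1 and F_{k+2} = F_{k+1} + F_k. -/
open Equiv Finset

/-- Combined avoidance predicate. -/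
abbrev Avs {n : ℕ} (w : Equiv.Perm (Fin n)) : Prop := Avoids321 w ∧ Avoids3412 w

/-- Number of avoiders in `S_n`. -/
noncomputable def avcard (n : ℕ) : ℕ := Nat.card {w : Equiv.Perm (Fin n) // Avs w}

/-- If `u` appears as a pattern inside `w` (positions via `θ`, values via `χ`),
then avoidance of `w` transfers to `u`. -/
lemma avs_reflect {m N : ℕ} (w : Perm (Fin N)) (u : Perm (Fin m))
    (θ χ : Fin m → Fin N) (hθ : StrictMono θ) (hχ : StrictMono χ)
    (hwu : ∀ j, w (θ j) = χ (u j)) (h : Avs w) : Avs u := by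
  constructor
  · rintro ⟨i, j, k, hij, hjk, h1, h2⟩
    exact h.1 ⟨θ i, θ j, θ k, hθ hij, hθ hjk,
      by rw [hwu, hwu]; exact hχ h1, by rw [hwu, hwu]; exact hχ h2⟩
  · rintro ⟨i, j, k, l, hij, hjk, hkl, h1, h2, h3⟩
    exact h.2 ⟨θ i, θ j, θ k, θ l, hθ hij, hθ hjk, hθ hkl,
      by rw [hwu, hwu]; exact hχ h1, by rw [hwu, hwu]; exact hχ h2,
      by rw [hwu, hwu]; exact hχ h3⟩

/-! ### The "core" construction : fibers with `w 0 = c ≥ 1`. -/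

section Core

variable {m N : ℕ}

/-- The value map for the tail: remaining values are `{c-1} ∪ {c+1, …, N-1}`. -/
def phiv (c : ℕ) (hm : 1 ≤ m) (hN : c + m = N) (j : Fin m) : Fin N :=
  if j.val = 0 then ⟨c - 1, by omega⟩
  else ⟨c + j.val, by have := j.isLt; omega⟩

lemma phiv_val_zero (c : ℕ) (hm : 1 ≤ m) (hN : c + m = N) (j : Fin m) (h : j.val = 0) :
    (phiv c hm hN j).val = c - 1 := by simp [phiv, h]

lemma phiv_val_pos (c : ℕ) (hm : 1 ≤ m) (hN : c + m = N) (j : Fin m) (h : j.val ≠ 0) :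
    (phiv c hm hN j).val = c + j.val := by simp [phiv, h]

lemma phiv_val_cases (c : ℕ) (hm : 1 ≤ m) (hN : c + m = N) (j : Fin m) :
    (phiv c hm hN j).val = c - 1 ∨ c + 1 ≤ (phiv c hm hN j).val := by
  by_cases h : j.val = 0
  · left; exact phiv_val_zero c hm hN j h
  · right; rw [phiv_val_pos c hm hN j h]; omega

lemma phiv_strictMono (c : ℕ) (hm : 1 ≤ m) (hN : c + m = N) :
    StrictMono (phiv c hm hN) := by
  intro j j' h
  rw [Fin.lt_def] at h ⊢
  by_cases h0 : j.val = 0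
  · have h0' : j'.val ≠ 0 := by omega
    rw [phiv_val_zero c hm hN j h0, phiv_val_pos c hm hN j' h0']
    omega
  · have h0' : j'.val ≠ 0 := by omega
    rw [phiv_val_pos c hm hN j h0, phiv_val_pos c hm hN j' h0']
    omega

/-- The glued function: `0 ↦ c`, prefix `i ↦ i-1`, tail via `phiv ∘ u`. -/
def fmap (c : ℕ) (hm : 1 ≤ m) (hN : c + m = N) (u : Perm (Fin m)) (i : Fin N) : Fin N :=
  if i.val = 0 then ⟨c, by omega⟩
  else if i.val < c then ⟨i.val - 1, by have := i.isLt; omega⟩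
  else phiv c hm hN (u ⟨i.val - c, by have := i.isLt; omega⟩)

lemma fmap_val_zero (c : ℕ) (hm : 1 ≤ m) (hN : c + m = N) (u : Perm (Fin m)) (i : Fin N)
    (h : i.val = 0) : (fmap c hm hN u i).val = c := by simp [fmap, h]

lemma fmap_val_pre (c : ℕ) (hm : 1 ≤ m) (hN : c + m = N) (u : Perm (Fin m)) (i : Fin N)
    (h0 : i.val ≠ 0) (h1 : i.val < c) : (fmap c hm hN u i).val = i.val - 1 := by
  simp [fmap, h0, h1]

lemma fmap_tail (c : ℕ) (hm : 1 ≤ m) (hN : c + m = N) (u : Perm (Fin m)) (i : Fin N)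
    (h0 : i.val ≠ 0) (h1 : ¬ i.val < c) :
    fmap c hm hN u i = phiv c hm hN (u ⟨i.val - c, by have := i.isLt; omega⟩) := by
  simp [fmap, h0, h1]

/-- Tail position with low value must carry the value `c - 1`. -/
lemma fmap_tail_low (c : ℕ) (hc : 1 ≤ c) (hm : 1 ≤ m) (hN : c + m = N) (u : Perm (Fin m))
    (i : Fin N) (h1 : c ≤ i.val) (hlow : (fmap c hm hN u i).val < c) :
    (fmap c hm hN u i).val = c - 1 := by
  have h0 : i.val ≠ 0 := by omega
  rw [fmap_tail c hm hN u i h0 (by omega)] at hlow ⊢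
  rcases phiv_val_cases c hm hN (u ⟨i.val - c, by have := i.isLt; omega⟩) with h | h
  · exact h
  · omega

/-- Values below `c` occur in increasing (position) order. -/
lemma fmap_mono_low (c : ℕ) (hc : 1 ≤ c) (hm : 1 ≤ m) (hN : c + m = N) (u : Perm (Fin m))
    {i i' : Fin N} (h : i < i')
    (hi : (fmap c hm hN u i).val < c) (hi' : (fmap c hm hN u i').val < c) :
    (fmap c hm hN u i).val < (fmap c hm hN u i').val := by
  rw [Fin.lt_def] at h
  have hi0 : i.val ≠ 0 := by
    intro h0
    rw [fmap_val_zero c hm hN u i h0] at hi; omega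
  have hi'0 : i'.val ≠ 0 := by omega
  by_cases hp : i.val < c
  · rw [fmap_val_pre c hm hN u i hi0 hp]
    by_cases hp' : i'.val < c
    · rw [fmap_val_pre c hm hN u i' hi'0 hp']; omega
    · have := fmap_tail_low c hc hm hN u i' (by omega) hi'
      omega
  · -- i in tail, so i' in tail, both values = c - 1: contradiction
    have hp' : ¬ i'.val < c := by omega
    have e1 := fmap_tail c hm hN u i hi0 hp
    have e2 := fmap_tail c hm hN u i' hi'0 hp'
    have l1 := fmap_tail_low c hc hm hN u i (by omega) hi
    have l2 := fmap_tail_low c hc hm hN u i' (by omega) hi'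
    exfalso
    have : fmap c hm hN u i = fmap c hm hN u i' := Fin.ext (by omega)
    rw [e1, e2] at this
    have := (phiv_strictMono c hm hN).injective this
    have := u.injective this
    have : i.val - c = i'.val - c := congrArg Fin.val this
    omega

lemma fmap_injective (c : ℕ) (hc : 1 ≤ c) (hm : 1 ≤ m) (hN : c + m = N) (u : Perm (Fin m)) :
    Function.Injective (fmap c hm hN u) := by
  intro i i' h
  have hval : (fmap c hm hN u i).val = (fmap c hm hN u i').val := congrArg Fin.val h
  by_cases h0 : i.val = 0 <;> by_cases h0' : i'.val = 0
  · exact Fin.ext (by omega)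
  · exfalso
    rw [fmap_val_zero c hm hN u i h0] at hval
    by_cases h1' : i'.val < c
    · rw [fmap_val_pre c hm hN u i' h0' h1'] at hval; omega
    · rw [fmap_tail c hm hN u i' h0' h1'] at hval
      rcases phiv_val_cases c hm hN (u ⟨i'.val - c, by have := i'.isLt; omega⟩) with hh | hh <;>
        omega
  · exfalso
    rw [fmap_val_zero c hm hN u i' h0'] at hval
    by_cases h1 : i.val < c
    · rw [fmap_val_pre c hm hN u i h0 h1] at hval; omega
    · rw [fmap_tail c hm hN u i h0 h1] at hval
      rcases phiv_val_cases c hm hN (u ⟨i.val - c, by have := i.isLt; omega⟩) with hh | hh <;>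
        omega
  · by_cases h1 : i.val < c <;> by_cases h1' : i'.val < c
    · rw [fmap_val_pre c hm hN u i h0 h1, fmap_val_pre c hm hN u i' h0' h1'] at hval
      exact Fin.ext (by omega)
    · exfalso
      rw [fmap_val_pre c hm hN u i h0 h1, fmap_tail c hm hN u i' h0' h1'] at hval
      rcases phiv_val_cases c hm hN (u ⟨i'.val - c, by have := i'.isLt; omega⟩) with hh | hh <;>
        omega
    · exfalso
      rw [fmap_val_pre c hm hN u i' h0' h1', fmap_tail c hm hN u i h0 h1] at hval
      rcases phiv_val_cases c hm hN (u ⟨i.val - c, by have := i.isLt; omega⟩) with hh | hh <;>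
        omega
    · rw [fmap_tail c hm hN u i h0 h1, fmap_tail c hm hN u i' h0' h1'] at h
      have := u.injective ((phiv_strictMono c hm hN).injective h)
      have : i.val - c = i'.val - c := congrArg Fin.val this
      exact Fin.ext (by omega)

/-- The glued permutation avoids the patterns if `u` does. -/
lemma fmap_avs (c : ℕ) (hc : 1 ≤ c) (hm : 1 ≤ m) (hN : c + m = N) (u : Perm (Fin m))
    (hu : Avs u) (w : Perm (Fin N)) (hw : ∀ x, w x = fmap c hm hN u x) : Avs w := by
  constructor
  · rintro ⟨i, j, k, hij, hjk, h1, h2⟩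
    rw [hw, hw] at h1
    rw [hw, hw] at h2
    rw [Fin.lt_def] at h1 h2
    by_cases hi0 : i.val = 0
    · rw [fmap_val_zero c hm hN u i hi0] at h2
      have := fmap_mono_low c hc hm hN u hjk (by omega) (by omega)
      omega
    · by_cases hip : i.val < c
      · have hei := fmap_val_pre c hm hN u i hi0 hip
        have := fmap_mono_low c hc hm hN u hij (by omega) (by omega)
        omega
      · -- all in the tail
        have hjc : ¬ j.val < c := by rw [Fin.lt_def] at hij; omega
        have hkc : ¬ k.val < c := by rw [Fin.lt_def] at hjk hij; omega
        have hj0 : j.val ≠ 0 := by omega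
        have hk0 : k.val ≠ 0 := by omega
        rw [fmap_tail c hm hN u i hi0 hip, fmap_tail c hm hN u j hj0 hjc] at h2
        rw [fmap_tail c hm hN u j hj0 hjc, fmap_tail c hm hN u k hk0 hkc] at h1
        rw [Fin.lt_def] at hij hjk
        refine hu.1 ⟨⟨i.val - c, by have := i.isLt; omega⟩, ⟨j.val - c, by have := j.isLt; omega⟩,
          ⟨k.val - c, by have := k.isLt; omega⟩, by simp [Fin.lt_def]; omega,
          by simp [Fin.lt_def]; omega, ?_, ?_⟩
        · exact (phiv_strictMono c hm hN).lt_iff_lt.mp (Fin.lt_def.mpr h1)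
        · exact (phiv_strictMono c hm hN).lt_iff_lt.mp (Fin.lt_def.mpr h2)
  · rintro ⟨i, j, k, l, hij, hjk, hkl, h1, h2, h3⟩
    rw [hw, hw] at h1
    rw [hw, hw] at h2
    rw [hw, hw] at h3
    rw [Fin.lt_def] at h1 h2 h3
    by_cases hi0 : i.val = 0
    · -- w i = c, so j is in the tail with value > c, hence k, l in tail with values < c,
      -- both forced to be c - 1: contradiction.
      rw [fmap_val_zero c hm hN u i hi0] at h2 h3
      have hjc : c ≤ j.val := by
        by_contra hcon
        have hj0 : j.val ≠ 0 := by rw [Fin.lt_def] at hij; omega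
        rw [fmap_val_pre c hm hN u j hj0 (by omega)] at h3; omega
      have hkc : c ≤ k.val := by rw [Fin.lt_def] at hjk; omega
      have hlc : c ≤ l.val := by rw [Fin.lt_def] at hkl; omega
      have e1 := fmap_tail_low c hc hm hN u k hkc (by omega)
      have e2 := fmap_tail_low c hc hm hN u l hlc (by omega)
      omega
    · by_cases hip : i.val < c
      · have hei := fmap_val_pre c hm hN u i hi0 hip
        have hil : i < l := lt_trans hij (lt_trans hjk hkl)
        have := fmap_mono_low c hc hm hN u hil (by omega) (by omega)
        omega
      · -- all in the tail
        rw [Fin.lt_def] at hij hjk hkl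
        have hjc : ¬ j.val < c := by omega
        have hkc : ¬ k.val < c := by omega
        have hlc : ¬ l.val < c := by omega
        have hj0 : j.val ≠ 0 := by omega
        have hk0 : k.val ≠ 0 := by omega
        have hl0 : l.val ≠ 0 := by omega
        rw [fmap_tail c hm hN u k hk0 hkc, fmap_tail c hm hN u l hl0 hlc] at h1
        rw [fmap_tail c hm hN u l hl0 hlc, fmap_tail c hm hN u i hi0 hip] at h2
        rw [fmap_tail c hm hN u i hi0 hip, fmap_tail c hm hN u j hj0 hjc] at h3
        refine hu.2 ⟨⟨i.val - c, by have := i.isLt; omega⟩, ⟨j.val - c, by have := j.isLt; omega⟩,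
          ⟨k.val - c, by have := k.isLt; omega⟩, ⟨l.val - c, by have := l.isLt; omega⟩,
          by simp [Fin.lt_def]; omega, by simp [Fin.lt_def]; omega, by simp [Fin.lt_def]; omega,
          ?_, ?_, ?_⟩
        · exact (phiv_strictMono c hm hN).lt_iff_lt.mp (Fin.lt_def.mpr h1)
        · exact (phiv_strictMono c hm hN).lt_iff_lt.mp (Fin.lt_def.mpr h2)
        · exact (phiv_strictMono c hm hN).lt_iff_lt.mp (Fin.lt_def.mpr h3)

/-! ### Structure of avoiders with `w 0 = c` -/

/-- For an avoider, values below `c = w 0` occur in increasing position order. -/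
lemma low_mono {N : ℕ} (hN0 : 0 < N) (w : Perm (Fin N)) (hw : Avs w) (c : ℕ)
    (h0 : (w ⟨0, hN0⟩).val = c) {p q : Fin N} (hpq : p < q)
    (hp : (w p).val < c) (hq : (w q).val < c) : (w p).val < (w q).val := by
  by_contra hcon
  push_neg at hcon
  have hne : w q ≠ w p := by
    intro e
    have := w.injective e
    rw [this] at hpq
    exact lt_irrefl _ hpq
  have hlt : w q < w p := lt_of_le_of_ne (Fin.le_def.mpr hcon) hne
  have hp0 : (⟨0, hN0⟩ : Fin N) < p := by
    rcases Nat.eq_zero_or_pos p.val with h | h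
    · exfalso
      have : p = ⟨0, hN0⟩ := Fin.ext h
      rw [this, h0] at hp
      omega
    · exact Fin.lt_def.mpr h
  exact hw.1 ⟨⟨0, hN0⟩, p, q, hp0, hpq, hlt, Fin.lt_def.mpr (by rw [h0]; omega)⟩

/-- Structure lemma: an avoider with `w 0 = c` satisfies `w v = v - 1` for `1 ≤ v < c`. -/
lemma prefix_struct {N : ℕ} (hN0 : 0 < N) (w : Perm (Fin N)) (hw : Avs w) (c : ℕ) (hcN : c < N)
    (h0 : (w ⟨0, hN0⟩).val = c) :
    ∀ v (_hv1 : 1 ≤ v) (_hv2 : v < c), (w ⟨v, by omega⟩).val = v - 1 := by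
  intro v
  induction v using Nat.strong_induction_on with
  | _ v ih =>
    intro hv1 hvc
    suffices hgen : ∀ (hvN : v < N), (w ⟨v, hvN⟩).val = v - 1 by exact hgen (by omega)
    intro hvN
    set i : Fin N := ⟨v, hvN⟩ with hidef
    have hival : i.val = v := rfl
    have hAne : (w i).val ≠ c := by
      intro h
      have he : w i = w ⟨0, hN0⟩ := Fin.ext (by rw [h0]; exact h)
      have h2 : v = 0 := congrArg Fin.val (w.injective he)
      omega
    have hBge : v - 1 ≤ (w i).val := by
      by_contra hcon
      push_neg at hcon
      have htN : (w i).val + 1 < N := by omega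
      have h1 : (w ⟨(w i).val + 1, htN⟩).val = (w i).val + 1 - 1 :=
        ih ((w i).val + 1) (by omega) (by omega) (by omega)
      have heq : w ⟨(w i).val + 1, htN⟩ = w i := Fin.ext (by rw [h1]; omega)
      have h4 : (w i).val + 1 = v := congrArg Fin.val (w.injective heq)
      omega
    have hpos : ∀ (x : ℕ) (hxN : x < N) (_hx1 : v - 1 ≤ x) (_hx2 : x < c),
        (w i).val ≠ x → v < (w.symm ⟨x, hxN⟩).val := by
      intro x hxN hx1 hx2 hx3
      by_contra hcon
      push_neg at hcon
      have hqval : (w (w.symm ⟨x, hxN⟩)).val = x := by rw [w.apply_symm_apply]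
      set q := w.symm ⟨x, hxN⟩ with hqdef
      rcases Nat.lt_or_ge q.val 1 with h | h
      · have hq0 : q = ⟨0, hN0⟩ := Fin.ext (show q.val = 0 by omega)
        rw [hq0] at hqval
        omega
      · rcases Nat.lt_or_ge q.val v with h2 | h2
        · have h3 : (w q).val = q.val - 1 := ih q.val h2 (by omega) (by omega)
          omega
        · have hqi : q = i := Fin.ext (show q.val = v by omega)
          rw [hqi] at hqval
          exact hx3 hqval
    rcases Nat.lt_trichotomy ((w i).val) c with hlow | heq2 | hhigh
    · -- value < c : must be exactly v - 1
      by_contra hne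
      have hge : v ≤ (w i).val := by omega
      have hp : v - 1 < N := by omega
      have hq := hpos (v - 1) hp (by omega) (by omega) hne
      have hwq : (w (w.symm ⟨v - 1, hp⟩)).val = v - 1 := by rw [w.apply_symm_apply]
      have hiq : i < w.symm ⟨v - 1, hp⟩ := Fin.lt_def.mpr (by omega)
      have hmono := low_mono hN0 w hw c h0 hiq hlow (by omega)
      omega
    · exact absurd heq2 hAne
    · -- value > c : build a 3412 pattern
      exfalso
      have hp1 : v - 1 < N := by omega
      have hp2 : v < N := by omega
      have hq1 := hpos (v - 1) hp1 (by omega) (by omega) (by omega)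
      have hq2 := hpos v hp2 (by omega) (by omega) (by omega)
      have hwq1 : (w (w.symm ⟨v - 1, hp1⟩)).val = v - 1 := by rw [w.apply_symm_apply]
      have hwq2 : (w (w.symm ⟨v, hp2⟩)).val = v := by rw [w.apply_symm_apply]
      have h12 : w.symm ⟨v - 1, hp1⟩ < w.symm ⟨v, hp2⟩ := by
        rcases lt_trichotomy (w.symm ⟨v - 1, hp1⟩) (w.symm ⟨v, hp2⟩) with h | h | h
        · exact h
        · exfalso
          have h5 : (w (w.symm ⟨v - 1, hp1⟩)).val = (w (w.symm ⟨v, hp2⟩)).val :=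
            congrArg (fun z => (w z).val) h
          omega
        · exfalso
          have := low_mono hN0 w hw c h0 h (by omega) (by omega)
          omega
      refine hw.2 ⟨⟨0, hN0⟩, i, w.symm ⟨v - 1, hp1⟩, w.symm ⟨v, hp2⟩,
        Fin.lt_def.mpr (show (0:ℕ) < i.val by omega),
        Fin.lt_def.mpr (by omega), h12,
        Fin.lt_def.mpr (by omega), Fin.lt_def.mpr (by omega), Fin.lt_def.mpr (by omega)⟩

/-- Evaluating `fmap` at a tail position. -/
lemma fmap_at_tail {m N : ℕ} (c : ℕ) (hc : 1 ≤ c) (hm : 1 ≤ m) (hN : c + m = N)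
    (u : Perm (Fin m)) (j : Fin m) (pf : c + j.val < N) :
    fmap c hm hN u ⟨c + j.val, pf⟩ = phiv c hm hN (u j) := by
  rw [fmap_tail c hm hN u _ (show c + j.val ≠ 0 by omega) (show ¬ c + j.val < c by omega)]
  exact congrArg (phiv c hm hN) (congrArg u (Fin.ext (show c + j.val - c = j.val by omega)))

/-- Surjectivity: every avoider with `w 0 = c ≥ 1` comes from the glued construction. -/
lemma core_surj {m N : ℕ} (c : ℕ) (hc : 1 ≤ c) (hm : 1 ≤ m) (hN : c + m = N)
    (w : Perm (Fin N)) (hw : Avs w) (h0 : (w ⟨0, by omega⟩).val = c) :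
    ∃ u : Perm (Fin m), ∀ x, w x = fmap c hm hN u x := by
  have hN0 : 0 < N := by omega
  have h0' : (w ⟨0, hN0⟩).val = c := h0
  have posN : ∀ j : Fin m, c + j.val < N := fun j => by have := j.isLt; omega
  -- tail values are c - 1 or ≥ c + 1
  have hS3 : ∀ j : Fin m, (w ⟨c + j.val, posN j⟩).val = c - 1 ∨
      c + 1 ≤ (w ⟨c + j.val, posN j⟩).val := by
    intro j
    have htne : (w ⟨c + j.val, posN j⟩).val ≠ c := by
      intro h
      have he : w ⟨c + j.val, posN j⟩ = w ⟨0, hN0⟩ := Fin.ext (by rw [h0']; exact h)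
      have h2 : c + j.val = 0 := congrArg Fin.val (w.injective he)
      omega
    have htlow : ¬ (w ⟨c + j.val, posN j⟩).val < c - 1 := by
      intro h
      have htN : (w ⟨c + j.val, posN j⟩).val + 1 < N := by omega
      have h1 : (w ⟨(w ⟨c + j.val, posN j⟩).val + 1, htN⟩).val =
          (w ⟨c + j.val, posN j⟩).val + 1 - 1 :=
        prefix_struct hN0 w hw c (by omega) h0' ((w ⟨c + j.val, posN j⟩).val + 1)
          (by omega) (by omega)
      have heq : w ⟨(w ⟨c + j.val, posN j⟩).val + 1, htN⟩ = w ⟨c + j.val, posN j⟩ :=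
        Fin.ext (by rw [h1]; omega)
      have h4 : (w ⟨c + j.val, posN j⟩).val + 1 = c + j.val :=
        congrArg Fin.val (w.injective heq)
      omega
    omega
  -- the pattern of w on the tail
  have hm0 : 0 < m := hm
  set g : Fin m → Fin m := fun j =>
    if (w ⟨c + j.val, posN j⟩).val = c - 1 then ⟨0, hm0⟩
    else ⟨(w ⟨c + j.val, posN j⟩).val - c,
      by have := (w ⟨c + j.val, posN j⟩).isLt; omega⟩ with hgdef
  have hgval_low : ∀ j : Fin m, (w ⟨c + j.val, posN j⟩).val = c - 1 → g j = ⟨0, hm0⟩ := by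
    intro j h
    rw [hgdef]
    simp only
    rw [if_pos h]
  have hgval_high : ∀ j : Fin m, (w ⟨c + j.val, posN j⟩).val ≠ c - 1 →
      (g j).val = (w ⟨c + j.val, posN j⟩).val - c := by
    intro j h
    rw [hgdef]
    simp only
    rw [if_neg h]
  have hginj : Function.Injective g := by
    intro j j' h
    have hposinj : (w ⟨c + j.val, posN j⟩).val = (w ⟨c + j'.val, posN j'⟩).val → j = j' := by
      intro he
      have : w ⟨c + j.val, posN j⟩ = w ⟨c + j'.val, posN j'⟩ := Fin.ext he
      have h2 : c + j.val = c + j'.val := congrArg Fin.val (w.injective this)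
      exact Fin.ext (by omega)
    by_cases ha : (w ⟨c + j.val, posN j⟩).val = c - 1 <;>
      by_cases hb : (w ⟨c + j'.val, posN j'⟩).val = c - 1
    · exact hposinj (by omega)
    · exfalso
      rw [hgval_low j ha] at h
      have h2 : (0 : ℕ) = (g j').val := congrArg Fin.val h
      rw [hgval_high j' hb] at h2
      rcases hS3 j' with hh | hh
      · exact hb hh
      · omega
    · exfalso
      rw [hgval_low j' hb] at h
      have h2 : (g j).val = (0 : ℕ) := congrArg Fin.val h
      rw [hgval_high j ha] at h2
      rcases hS3 j with hh | hh
      · exact ha hh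
      · omega
    · have h2 : (g j).val = (g j').val := congrArg Fin.val h
      rw [hgval_high j ha, hgval_high j' hb] at h2
      rcases hS3 j with hh | hh
      · exact absurd hh ha
      · rcases hS3 j' with hh' | hh'
        · exact absurd hh' hb
        · exact hposinj (by omega)
  have hgbij : Function.Bijective g := Finite.injective_iff_bijective.mp hginj
  refine ⟨Equiv.ofBijective g hgbij, ?_⟩
  have hkey : ∀ j : Fin m, w ⟨c + j.val, posN j⟩ = phiv c hm hN (g j) := by
    intro j
    by_cases hcase : (w ⟨c + j.val, posN j⟩).val = c - 1
    · rw [hgval_low j hcase]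
      refine (Fin.ext ?_).symm
      rw [phiv_val_zero c hm hN _ rfl]
      omega
    · have hbig : c + 1 ≤ (w ⟨c + j.val, posN j⟩).val := by
        rcases hS3 j with hh | hh
        · exact absurd hh hcase
        · exact hh
      refine (Fin.ext ?_).symm
      have hne0 : (g j).val ≠ 0 := by rw [hgval_high j hcase]; omega
      rw [phiv_val_pos c hm hN _ hne0, hgval_high j hcase]
      omega
  intro x
  rcases Nat.lt_or_ge x.val 1 with hx | hx
  · have hxe : x = ⟨0, hN0⟩ := Fin.ext (show x.val = 0 by omega)
    rw [hxe]
    refine Fin.ext ?_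
    rw [fmap_val_zero c hm hN _ _ rfl]
    exact h0'
  · rcases Nat.lt_or_ge x.val c with hx2 | hx2
    · have h1 : (w ⟨x.val, by omega⟩).val = x.val - 1 :=
        prefix_struct hN0 w hw c (by omega) h0' x.val hx hx2
      have h2 : (w x).val = x.val - 1 := h1
      refine Fin.ext ?_
      rw [fmap_val_pre c hm hN _ x (by omega) hx2]
      exact h2
    · have hjm : x.val - c < m := by have := x.isLt; omega
      have hxe : x = ⟨c + (⟨x.val - c, hjm⟩ : Fin m).val, posN ⟨x.val - c, hjm⟩⟩ :=
        Fin.ext (show x.val = c + (x.val - c) by omega)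
      rw [hxe, hkey ⟨x.val - c, hjm⟩,
        fmap_at_tail c hc hm hN _ ⟨x.val - c, hjm⟩ (posN ⟨x.val - c, hjm⟩)]
      rfl

/-- Fiber count for `c ≥ 1`. -/
lemma core_card {m N : ℕ} (c : ℕ) (hc : 1 ≤ c) (hm : 1 ≤ m) (hN : c + m = N)
    (K : Fin N) (hK : K.val = c) :
    Nat.card {w : Perm (Fin N) // Avs w ∧ w ⟨0, by omega⟩ = K} =
      Nat.card {u : Perm (Fin m) // Avs u} := by
  have hN0 : 0 < N := by omega
  set G : {u : Perm (Fin m) // Avs u} → {w : Perm (Fin N) // Avs w ∧ w ⟨0, by omega⟩ = K} :=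
    fun u => ⟨Equiv.ofBijective (fmap c hm hN u.1)
        (Finite.injective_iff_bijective.mp (fmap_injective c hc hm hN u.1)),
      ⟨fmap_avs c hc hm hN u.1 u.2 _ (fun _ => rfl),
        Fin.ext (by
          rw [Equiv.ofBijective_apply, fmap_val_zero c hm hN u.1 _ rfl, hK])⟩⟩
    with hGdef
  have hGinj : Function.Injective G := by
    intro u u' h
    have h2 : ∀ x, fmap c hm hN u.1 x = fmap c hm hN u'.1 x := by
      intro x
      have := congrArg Subtype.val h
      exact congrFun (congrArg (fun (e : Perm (Fin N)) => (e : Fin N → Fin N)) this) x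
    refine Subtype.ext (Equiv.ext fun j => ?_)
    have pf : c + j.val < N := by have := j.isLt; omega
    have h3 : phiv c hm hN (u.1 j) = phiv c hm hN (u'.1 j) := by
      rw [← fmap_at_tail c hc hm hN u.1 j pf, ← fmap_at_tail c hc hm hN u'.1 j pf]
      exact h2 ⟨c + j.val, pf⟩
    exact (phiv_strictMono c hm hN).injective h3
  have hGsurj : Function.Surjective G := by
    rintro ⟨w, hw, hfib⟩
    have h0 : (w ⟨0, by omega⟩).val = c := by rw [hfib, hK]
    obtain ⟨u, hu⟩ := core_surj c hc hm hN w hw h0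
    have hθ : StrictMono (fun j : Fin m =>
        (⟨c + j.val, show c + j.val < N by have := j.isLt; omega⟩ : Fin N)) := by
      intro a b hab
      rw [Fin.lt_def] at hab ⊢
      simpa using hab
    have havu : Avs u := by
      refine avs_reflect w u _ (phiv c hm hN) hθ (phiv_strictMono c hm hN) (fun j => ?_) hw
      rw [hu]
      exact fmap_at_tail c hc hm hN u j _
    refine ⟨⟨u, havu⟩, ?_⟩
    refine Subtype.ext (Equiv.ext fun x => ?_)
    rw [hGdef]
    simp only [Equiv.ofBijective_apply]
    exact (hu x).symm
  exact (Nat.card_congr (Equiv.ofBijective G ⟨hGinj, hGsurj⟩)).symm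

end Core

/-! ### The fiber `w 0 = 0`. -/

section Zero

variable {m N : ℕ}

def zmap (hN : m + 1 = N) (u : Perm (Fin m)) (i : Fin N) : Fin N :=
  if h : i.val = 0 then ⟨0, by omega⟩
  else ⟨(u ⟨i.val - 1, by have := i.isLt; omega⟩).val + 1,
    by have := (u ⟨i.val - 1, by have := i.isLt; omega⟩).isLt; omega⟩

lemma zmap_val_zero (hN : m + 1 = N) (u : Perm (Fin m)) (i : Fin N) (h : i.val = 0) :
    (zmap hN u i).val = 0 := by simp [zmap, h]

lemma zmap_val_pos (hN : m + 1 = N) (u : Perm (Fin m)) (i : Fin N) (h : i.val ≠ 0)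
    (pf : i.val - 1 < m) :
    (zmap hN u i).val = (u ⟨i.val - 1, pf⟩).val + 1 := by
  simp only [zmap]
  rw [dif_neg h]

lemma zmap_at_pos (hN : m + 1 = N) (u : Perm (Fin m)) (j : Fin m) (pf : j.val + 1 < N) :
    (zmap hN u ⟨j.val + 1, pf⟩).val = (u j).val + 1 := by
  have pf2 : j.val + 1 - 1 < m := by have := j.isLt; omega
  rw [zmap_val_pos hN u _ (show j.val + 1 ≠ 0 by omega) pf2]
  have he : (⟨j.val + 1 - 1, pf2⟩ : Fin m) = j := Fin.ext (show j.val + 1 - 1 = j.val by omega)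
  rw [he]

lemma zmap_injective (hN : m + 1 = N) (u : Perm (Fin m)) :
    Function.Injective (zmap hN u) := by
  intro i i' h
  have hval := congrArg Fin.val h
  by_cases h0 : i.val = 0 <;> by_cases h0' : i'.val = 0
  · exact Fin.ext (by omega)
  · exfalso
    have pf' : i'.val - 1 < m := by have := i'.isLt; omega
    rw [zmap_val_zero hN u i h0, zmap_val_pos hN u i' h0' pf'] at hval
    omega
  · exfalso
    have pf : i.val - 1 < m := by have := i.isLt; omega
    rw [zmap_val_zero hN u i' h0', zmap_val_pos hN u i h0 pf] at hval
    omega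
  · have pf : i.val - 1 < m := by have := i.isLt; omega
    have pf' : i'.val - 1 < m := by have := i'.isLt; omega
    rw [zmap_val_pos hN u i h0 pf, zmap_val_pos hN u i' h0' pf'] at hval
    have h2 : u ⟨i.val - 1, pf⟩ = u ⟨i'.val - 1, pf'⟩ := Fin.ext (by omega)
    have h3 : i.val - 1 = i'.val - 1 := congrArg Fin.val (u.injective h2)
    exact Fin.ext (by omega)

lemma zmap_avs (hN : m + 1 = N) (u : Perm (Fin m)) (hu : Avs u) (w : Perm (Fin N))
    (hw : ∀ x, w x = zmap hN u x) : Avs w := by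
  constructor
  · rintro ⟨i, j, k, hij, hjk, h1, h2⟩
    rw [hw, hw] at h1
    rw [hw, hw] at h2
    rw [Fin.lt_def] at h1 h2 hij hjk
    by_cases hi0 : i.val = 0
    · rw [zmap_val_zero hN u i hi0] at h2; omega
    · have hj0 : j.val ≠ 0 := by omega
      have hk0 : k.val ≠ 0 := by omega
      have pfi : i.val - 1 < m := by have := i.isLt; omega
      have pfj : j.val - 1 < m := by have := j.isLt; omega
      have pfk : k.val - 1 < m := by have := k.isLt; omega
      rw [zmap_val_pos hN u i hi0 pfi, zmap_val_pos hN u j hj0 pfj] at h2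
      rw [zmap_val_pos hN u j hj0 pfj, zmap_val_pos hN u k hk0 pfk] at h1
      refine hu.1 ⟨⟨i.val - 1, pfi⟩, ⟨j.val - 1, pfj⟩, ⟨k.val - 1, pfk⟩,
        Fin.lt_def.mpr (show i.val - 1 < j.val - 1 by omega),
        Fin.lt_def.mpr (show j.val - 1 < k.val - 1 by omega),
        Fin.lt_def.mpr (by omega), Fin.lt_def.mpr (by omega)⟩
  · rintro ⟨i, j, k, l, hij, hjk, hkl, h1, h2, h3⟩
    rw [hw, hw] at h1
    rw [hw, hw] at h2
    rw [hw, hw] at h3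
    rw [Fin.lt_def] at h1 h2 h3 hij hjk hkl
    by_cases hi0 : i.val = 0
    · rw [zmap_val_zero hN u i hi0] at h2; omega
    · have hj0 : j.val ≠ 0 := by omega
      have hk0 : k.val ≠ 0 := by omega
      have hl0 : l.val ≠ 0 := by omega
      have pfi : i.val - 1 < m := by have := i.isLt; omega
      have pfj : j.val - 1 < m := by have := j.isLt; omega
      have pfk : k.val - 1 < m := by have := k.isLt; omega
      have pfl : l.val - 1 < m := by have := l.isLt; omega
      rw [zmap_val_pos hN u k hk0 pfk, zmap_val_pos hN u l hl0 pfl] at h1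
      rw [zmap_val_pos hN u l hl0 pfl, zmap_val_pos hN u i hi0 pfi] at h2
      rw [zmap_val_pos hN u i hi0 pfi, zmap_val_pos hN u j hj0 pfj] at h3
      refine hu.2 ⟨⟨i.val - 1, pfi⟩, ⟨j.val - 1, pfj⟩, ⟨k.val - 1, pfk⟩, ⟨l.val - 1, pfl⟩,
        Fin.lt_def.mpr (show i.val - 1 < j.val - 1 by omega),
        Fin.lt_def.mpr (show j.val - 1 < k.val - 1 by omega),
        Fin.lt_def.mpr (show k.val - 1 < l.val - 1 by omega),
        Fin.lt_def.mpr (by omega), Fin.lt_def.mpr (by omega), Fin.lt_def.mpr (by omega)⟩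

lemma zero_surj (hN : m + 1 = N) (w : Perm (Fin N)) (h0 : (w ⟨0, by omega⟩).val = 0) :
    ∃ u : Perm (Fin m), ∀ x, w x = zmap hN u x := by
  have hN0 : 0 < N := by omega
  have h0' : (w ⟨0, hN0⟩).val = 0 := h0
  have posN : ∀ j : Fin m, j.val + 1 < N := fun j => by have := j.isLt; omega
  have hne : ∀ j : Fin m, (w ⟨j.val + 1, posN j⟩).val ≠ 0 := by
    intro j h
    have he : w ⟨j.val + 1, posN j⟩ = w ⟨0, hN0⟩ := Fin.ext (by rw [h0']; exact h)
    have h2 : j.val + 1 = 0 := congrArg Fin.val (w.injective he)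
    omega
  set g : Fin m → Fin m := fun j => ⟨(w ⟨j.val + 1, posN j⟩).val - 1,
    by have := (w ⟨j.val + 1, posN j⟩).isLt; have := j.isLt; omega⟩ with hgdef
  have hgval : ∀ j : Fin m, (g j).val = (w ⟨j.val + 1, posN j⟩).val - 1 := fun j => rfl
  have hginj : Function.Injective g := by
    intro j j' h
    have h2 : (g j).val = (g j').val := congrArg Fin.val h
    rw [hgval j, hgval j'] at h2
    have h1 := hne j
    have h1' := hne j'
    have he : w ⟨j.val + 1, posN j⟩ = w ⟨j'.val + 1, posN j'⟩ := Fin.ext (by omega)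
    have h3 : j.val + 1 = j'.val + 1 := congrArg Fin.val (w.injective he)
    exact Fin.ext (by omega)
  refine ⟨Equiv.ofBijective g (Finite.injective_iff_bijective.mp hginj), ?_⟩
  intro x
  rcases Nat.lt_or_ge x.val 1 with hx | hx
  · have hxe : x = ⟨0, hN0⟩ := Fin.ext (show x.val = 0 by omega)
    rw [hxe]
    refine Fin.ext ?_
    rw [zmap_val_zero hN _ _ rfl]
    exact h0'
  · have pfx : x.val - 1 < m := by have := x.isLt; omega
    refine Fin.ext ?_
    rw [zmap_val_pos hN _ x (by omega) pfx]
    rw [Equiv.ofBijective_apply, hgval ⟨x.val - 1, pfx⟩]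
    have hxe : (⟨(⟨x.val - 1, pfx⟩ : Fin m).val + 1, posN ⟨x.val - 1, pfx⟩⟩ : Fin N) = x :=
      Fin.ext (show (x.val - 1) + 1 = x.val by omega)
    rw [hxe]
    have := hne ⟨x.val - 1, pfx⟩
    rw [hxe] at this
    omega

lemma zero_card (hN : m + 1 = N) (K : Fin N) (hK : K.val = 0) :
    Nat.card {w : Perm (Fin N) // Avs w ∧ w ⟨0, by omega⟩ = K} =
      Nat.card {u : Perm (Fin m) // Avs u} := by
  set G : {u : Perm (Fin m) // Avs u} → {w : Perm (Fin N) // Avs w ∧ w ⟨0, by omega⟩ = K} :=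
    fun u => ⟨Equiv.ofBijective (zmap hN u.1)
        (Finite.injective_iff_bijective.mp (zmap_injective hN u.1)),
      ⟨zmap_avs hN u.1 u.2 _ (fun _ => rfl),
        Fin.ext (by rw [Equiv.ofBijective_apply, zmap_val_zero hN u.1 _ rfl, hK])⟩⟩
    with hGdef
  have hGinj : Function.Injective G := by
    intro u u' h
    have h2 : ∀ x, zmap hN u.1 x = zmap hN u'.1 x := by
      intro x
      have := congrArg Subtype.val h
      exact congrFun (congrArg (fun (e : Perm (Fin N)) => (e : Fin N → Fin N)) this) x
    refine Subtype.ext (Equiv.ext fun j => ?_)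
    have pf : j.val + 1 < N := by have := j.isLt; omega
    have h4 : (zmap hN u.1 ⟨j.val + 1, pf⟩).val = (zmap hN u'.1 ⟨j.val + 1, pf⟩).val :=
      congrArg Fin.val (h2 ⟨j.val + 1, pf⟩)
    rw [zmap_at_pos hN u.1 j pf, zmap_at_pos hN u'.1 j pf] at h4
    exact Fin.ext (by omega)
  have hGsurj : Function.Surjective G := by
    rintro ⟨w, hw, hfib⟩
    have h0 : (w ⟨0, by omega⟩).val = 0 := by rw [hfib, hK]
    obtain ⟨u, hu⟩ := zero_surj hN w h0
    have hθ : StrictMono (fun j : Fin m =>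
        (⟨j.val + 1, show j.val + 1 < N by have := j.isLt; omega⟩ : Fin N)) := by
      intro a b hab
      rw [Fin.lt_def] at hab ⊢
      simpa using hab
    have havu : Avs u := by
      refine avs_reflect w u _ _ hθ hθ (fun j => ?_) hw
      rw [hu]
      exact Fin.ext (zmap_at_pos hN u j _)
    refine ⟨⟨u, havu⟩, ?_⟩
    refine Subtype.ext (Equiv.ext fun x => ?_)
    rw [hGdef]
    simp only [Equiv.ofBijective_apply]
    exact (hu x).symm
  exact (Nat.card_congr (Equiv.ofBijective G ⟨hGinj, hGsurj⟩)).symm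

end Zero

/-! ### The recursion and Fibonacci. -/

lemma avcard_zero : avcard 0 = 1 := by
  have h : ∀ w : Perm (Fin 0), Avs w := by
    intro w
    constructor
    · rintro ⟨i, -⟩; exact i.elim0
    · rintro ⟨i, -⟩; exact i.elim0
  rw [avcard, Nat.card_congr (Equiv.subtypeUnivEquiv h)]
  simp [Nat.card_eq_fintype_card]

lemma avcard_succ (n : ℕ) :
    avcard (n + 1) = avcard n + ∑ i ∈ Finset.range n, avcard (i + 1) := by
  classical
  have h0 : (0 : ℕ) < n + 1 := n.succ_pos
  have e : {w : Perm (Fin (n + 1)) // Avs w} ≃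
      Σ K : Fin (n + 1), {w : Perm (Fin (n + 1)) // Avs w ∧ w ⟨0, h0⟩ = K} :=
    { toFun := fun w => ⟨w.1 ⟨0, h0⟩, ⟨w.1, w.2, rfl⟩⟩
      invFun := fun s => ⟨s.2.1, s.2.2.1⟩
      left_inv := fun w => rfl
      right_inv := fun s => by rcases s with ⟨K, w, hw, rfl⟩; rfl }
  have step1 : avcard (n + 1) =
      ∑ K : Fin (n + 1), Nat.card {w : Perm (Fin (n + 1)) // Avs w ∧ w ⟨0, h0⟩ = K} := by
    rw [avcard, Nat.card_congr e]
    simp only [Nat.card_eq_fintype_card]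
    rw [Fintype.card_sigma]
  rw [step1, Fin.sum_univ_succ]
  congr 1
  · -- the K = 0 fiber
    exact zero_card (m := n) rfl 0 (by simp)
  · -- the other fibers
    have step2 : ∀ i : Fin n,
        Nat.card {w : Perm (Fin (n + 1)) // Avs w ∧ w ⟨0, h0⟩ = i.succ} =
          avcard (n - i.val) := by
      intro i
      exact core_card (m := n - i.val) (i.val + 1) (by omega) (by have := i.isLt; omega)
        (by have := i.isLt; omega) (i.succ) (by simp)
    calc ∑ i : Fin n,
        Nat.card {w : Perm (Fin (n + 1)) // Avs w ∧ w ⟨0, h0⟩ = i.succ} =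
        ∑ i : Fin n, avcard (n - i.val) := by
          exact Finset.sum_congr rfl (fun i _ => step2 i)
      _ = ∑ i ∈ Finset.range n, avcard (n - i) := by
          rw [Fin.sum_univ_eq_sum_range (fun i => avcard (n - i)) n]
      _ = ∑ i ∈ Finset.range n, avcard (i + 1) := by
          rw [← Finset.sum_range_reflect (fun i => avcard (i + 1)) n]
          refine Finset.sum_congr rfl (fun i hi => ?_)
          rw [Finset.mem_range] at hi
          congr 1
          omega

lemma fib_odd_sum (n : ℕ) : ∑ i ∈ Finset.range n, Nat.fib (2 * i + 1) = Nat.fib (2 * n) := by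
  induction n with
  | zero => simp
  | succ k ih =>
    rw [Finset.sum_range_succ, ih, show 2 * (k + 1) = 2 * k + 2 by ring, Nat.fib_add_two]

lemma avcard_eq (n : ℕ) (hn : 1 ≤ n) : avcard n = Nat.fib (2 * n - 1) := by
  induction n using Nat.strong_induction_on with
  | _ n ih =>
    match n, hn with
    | 1, _ => 
      have h1 : avcard 1 = 1 := by
        rw [avcard_succ 0, avcard_zero]
        simp
      rw [h1]
      rfl
    | (k + 2), _ =>
      rw [avcard_succ (k + 1)]
      have h1 : avcard (k + 1) = Nat.fib (2 * (k + 1) - 1) :=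
        ih (k + 1) (by omega) (by omega)
      have h2 : ∑ i ∈ Finset.range (k + 1), avcard (i + 1) =
          ∑ i ∈ Finset.range (k + 1), Nat.fib (2 * i + 1) := by
        refine Finset.sum_congr rfl (fun i hi => ?_)
        rw [Finset.mem_range] at hi
        rw [ih (i + 1) (by omega) (by omega)]
        exact congrArg Nat.fib (by omega)
      rw [h1, h2, fib_odd_sum]
      have h3 : 2 * (k + 2) - 1 = (2 * (k + 1) - 1) + 2 := by omega
      rw [h3, Nat.fib_add_two]
      exact congrArg (fun t => Nat.fib (2 * (k + 1) - 1) + Nat.fib t) (by omega)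

/-- Fan's enumeration: the number of permutations in `S_n` avoiding both 321
and 3412 is the Fibonacci number `F_{2n-1}` (with `F_1 = F_2 = 1`). -/
theorem stmt9 (n : ℕ) (hn : 1 ≤ n) :
    Nat.card {w : Equiv.Perm (Fin n) // Avoids321 w ∧ Avoids3412 w} =
      Nat.fib (2 * n - 1) := by
  exact avcard_eq n hn
end

section
/- Let λ = (λ_1 ≤ ... ≤ λ_m), μ = (μ_1 ≤ ... ≤ μ_m) be weakly increasing integer sequences and let Q(λ,μ) = {w ∈ S_m : λ_i ≤ μ_{w(i)} + 1 for all i}. Then Q(λ,μ) is a lower ideal in the Bruhat order: if w ∈ Q(λ,μ) and x ≤ w in the Bruhat order, then x ∈ Q(λ,μ). -/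
lemma key {m : ℕ} (u : Equiv.Perm (Fin m)) (a b : Fin m) (hab : a < b)
    (hpos : u⁻¹ a < u⁻¹ b) :
    PermLength u < PermLength (Equiv.swap a b * u) := by
  set i := u⁻¹ a with hi
  set j := u⁻¹ b with hj
  set z := Equiv.swap a b * u with hzdef
  have hui : u i = a := u.apply_symm_apply a
  have huj : u j = b := u.apply_symm_apply b
  set s := Equiv.swap i j with hs
  have hzs : ∀ k, z (s k) = u k := by
    intro k
    rcases eq_or_ne k i with rfl | hki
    · simp [hs, hzdef, Equiv.swap_apply_left, hui, huj]
    rcases eq_or_ne k j with rfl | hkj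
    · simp [hs, hzdef, Equiv.swap_apply_right, hui, huj]
    · have : s k = k := Equiv.swap_apply_of_ne_of_ne hki hkj
      rw [this]
      have h1 : u k ≠ a := fun h => hki (by rw [hi, ← h]; exact (Equiv.symm_apply_apply u k).symm)
      have h2 : u k ≠ b := fun h => hkj (by rw [hj, ← h]; exact (Equiv.symm_apply_apply u k).symm)
      simp [hzdef, Equiv.swap_apply_of_ne_of_ne h1 h2]
  have hzi : z i = b := by simp [hzdef, hui, Equiv.swap_apply_left]
  have hzj : z j = a := by simp [hzdef, huj, Equiv.swap_apply_right]
  have hzk : ∀ k, k ≠ i → k ≠ j → z k = u k := by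
    intro k hki hkj
    have h1 : u k ≠ a := fun h => hki (by rw [hi, ← h]; exact (Equiv.symm_apply_apply u k).symm)
    have h2 : u k ≠ b := fun h => hkj (by rw [hj, ← h]; exact (Equiv.symm_apply_apply u k).symm)
    simp [hzdef, Equiv.swap_apply_of_ne_of_ne h1 h2]
  set F : Fin m × Fin m → Fin m × Fin m :=
    fun p => if (i < p.1 ∧ p.1 < j) ∨ (i < p.2 ∧ p.2 < j) then p else (s p.1, s p.2)
    with hF
  have hnb : ∀ x : Fin m, ¬(i < x ∧ x < j) → ¬(i < s x ∧ s x < j) := by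
    intro x hx
    rcases eq_or_ne x i with rfl | hxi
    · rw [hs, Equiv.swap_apply_left]; exact fun h => lt_irrefl _ h.2
    rcases eq_or_ne x j with rfl | hxj
    · rw [hs, Equiv.swap_apply_right]; exact fun h => lt_irrefl _ h.1
    · rwa [hs, Equiv.swap_apply_of_ne_of_ne hxi hxj]
  have hFF : ∀ p, F (F p) = p := by
    intro p
    by_cases h : (i < p.1 ∧ p.1 < j) ∨ (i < p.2 ∧ p.2 < j)
    · simp only [hF, if_pos h]
    · have h1 : ¬(i < p.1 ∧ p.1 < j) := fun hc => h (Or.inl hc)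
      have h2 : ¬(i < p.2 ∧ p.2 < j) := fun hc => h (Or.inr hc)
      have h' : ¬((i < s p.1 ∧ s p.1 < j) ∨ (i < s p.2 ∧ s p.2 < j)) := by
        rintro (hc | hc)
        exacts [hnb _ h1 hc, hnb _ h2 hc]
      simp only [hF, if_neg h]
      rw [if_neg h']
      simp [hs, Equiv.swap_apply_self]
  have hFinj : Function.Injective F := fun p q h => by rw [← hFF p, h, hFF q]
  set Inv : Equiv.Perm (Fin m) → Finset (Fin m × Fin m) :=
    fun v => Finset.univ.filter (fun p : Fin m × Fin m => p.1 < p.2 ∧ v p.2 < v p.1)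
    with hInv
  have hmaps : ∀ p ∈ Inv u, F p ∈ Inv z := by
    intro p hp
    simp only [hInv, Finset.mem_filter, Finset.mem_univ, true_and] at hp ⊢
    obtain ⟨hlt, hinv⟩ := hp
    by_cases h : (i < p.1 ∧ p.1 < j) ∨ (i < p.2 ∧ p.2 < j)
    · simp only [hF, if_pos h]
      refine ⟨hlt, ?_⟩
      -- case analysis on p.1, p.2 vs i, j
      rcases eq_or_ne p.1 i with h1i | h1i
      · rcases eq_or_ne p.2 j with h2j | h2j
        · rw [h1i, h2j] at hinv; rw [hui, huj] at hinv; exact absurd hinv (not_lt.2 hab.le)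
        · have h2i : p.2 ≠ i := by rw [← h1i]; exact hlt.ne'
          rw [h1i, hzi, hzk _ h2i h2j]
          calc u p.2 < u p.1 := hinv
            _ = a := by rw [h1i, hui]
            _ < b := hab
      rcases eq_or_ne p.1 j with h1j | h1j
      · -- p.1 = j: condition must fail
        exfalso
        rcases h with ⟨hc1, hc2⟩ | ⟨hc1, hc2⟩
        · rw [h1j] at hc2; exact lt_irrefl _ hc2
        · rw [h1j] at hlt; exact lt_irrefl _ (hc2.trans hlt)
      rcases eq_or_ne p.2 i with h2i | h2i
      · exfalso
        rcases h with ⟨hc1, hc2⟩ | ⟨hc1, hc2⟩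
        · rw [h2i] at hlt; exact lt_irrefl _ (hc1.trans hlt)
        · rw [h2i] at hc1; exact lt_irrefl _ hc1
      rcases eq_or_ne p.2 j with h2j | h2j
      · rw [hzk _ h1i h1j, h2j, hzj]
        calc a < b := hab
          _ = u p.2 := by rw [h2j, huj]
          _ < u p.1 := hinv
      · rw [hzk _ h1i h1j, hzk _ h2i h2j]; exact hinv
    · simp only [hF, if_neg h]
      refine ⟨?_, by rw [hzs, hzs]; exact hinv⟩
      -- order preservation
      rcases eq_or_ne p.1 i with h1i | h1i
      · have h2nj : p.2 ≠ j := by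
          intro h2j
          rw [h1i, h2j, hui, huj] at hinv; exact absurd hinv (not_lt.2 hab.le)
        have h2gt : j < p.2 := by
          have : i < p.2 := h1i ▸ hlt
          rcases lt_trichotomy p.2 j with hc | hc | hc
          · exact absurd (And.intro this hc) (fun hx => h (Or.inr hx))
          · exact absurd hc h2nj
          · exact hc
        have h2ni : p.2 ≠ i := (h1i ▸ hlt).ne'
        rw [h1i, hs, Equiv.swap_apply_left, Equiv.swap_apply_of_ne_of_ne h2ni h2nj]
        exact h2gt
      rcases eq_or_ne p.1 j with h1j | h1j
      · have h2gt : j < p.2 := h1j ▸ hlt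
        have h2ni : p.2 ≠ i := fun hc => absurd (hc ▸ h2gt) (not_lt.2 hpos.le)
        have h2nj : p.2 ≠ j := h2gt.ne'
        rw [h1j, hs, Equiv.swap_apply_right, Equiv.swap_apply_of_ne_of_ne h2ni h2nj]
        exact hpos.trans h2gt
      rcases eq_or_ne p.2 i with h2i | h2i
      · have h1lt : p.1 < i := h2i ▸ hlt
        rw [h2i, hs, Equiv.swap_apply_left, Equiv.swap_apply_of_ne_of_ne h1i h1j]
        exact h1lt.trans hpos
      rcases eq_or_ne p.2 j with h2j | h2j
      · have h1lt : p.1 < i := by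
          have hpj : p.1 < j := h2j ▸ hlt
          rcases lt_trichotomy p.1 i with hc | hc | hc
          · exact hc
          · exact absurd hc h1i
          · exact absurd (And.intro hc hpj) (fun hx => h (Or.inl hx))
        rw [h2j, hs, Equiv.swap_apply_right, Equiv.swap_apply_of_ne_of_ne h1i h1j]
        exact h1lt
      · rw [hs, Equiv.swap_apply_of_ne_of_ne h1i h1j,
          Equiv.swap_apply_of_ne_of_ne h2i h2j]
        exact hlt
  have hmem : (i, j) ∈ Inv z := by
    simp only [hInv, Finset.mem_filter, Finset.mem_univ, true_and]
    exact ⟨hpos, by rw [hzi, hzj]; exact hab⟩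
  have hnotmem : (i, j) ∉ (Inv u).image F := by
    intro hc
    obtain ⟨p, hp, hfp⟩ := Finset.mem_image.1 hc
    have hpij : p = F (i, j) := by rw [← hFF p, hfp]
    have : F (i, j) = (j, i) := by
      simp only [hF]
      rw [if_neg (by rintro (⟨hc, -⟩ | ⟨-, hc⟩) <;> exact lt_irrefl _ hc)]
      simp [hs, Equiv.swap_apply_left, Equiv.swap_apply_right]
    rw [this] at hpij
    simp only [hInv, Finset.mem_filter, Finset.mem_univ, true_and] at hp
    rw [hpij] at hp
    exact absurd (hp.1.trans hpos) (lt_irrefl _)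
  have hss : (Inv u).image F ⊂ Inv z := by
    refine (Finset.ssubset_iff_of_subset ?_).2 ⟨(i, j), hmem, hnotmem⟩
    intro q hq
    obtain ⟨p, hp, rfl⟩ := Finset.mem_image.1 hq
    exact hmaps p hp
  have := Finset.card_lt_card hss
  rwa [Finset.card_image_of_injective _ hFinj] at this

lemma step' {m : ℕ} (lam mu : Fin m → ℤ) (hlam : Monotone lam) (hmu : Monotone mu)
    (y : Equiv.Perm (Fin m)) (a b : Fin m) (hab : a < b)
    (hlen : PermLength y < PermLength (Equiv.swap a b * y))
    (hz : ∀ i, lam i ≤ mu ((Equiv.swap a b * y) i) + 1) :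
    ∀ i, lam i ≤ mu (y i) + 1 := by
  set z := Equiv.swap a b * y with hzdef
  set i := y⁻¹ a with hi
  set j := y⁻¹ b with hj
  have hyi : y i = a := y.apply_symm_apply a
  have hyj : y j = b := y.apply_symm_apply b
  have hij : i < j := by
    rcases lt_trichotomy i j with h | h | h
    · exact h
    · have : a = b := by rw [← hyi, ← hyj, h]
      exact absurd this hab.ne
    · exfalso
      have hzi : z⁻¹ a < z⁻¹ b := by
        have e1 : z⁻¹ a = j := by
          rw [hzdef, mul_inv_rev, Equiv.Perm.mul_apply, Equiv.swap_inv,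
            Equiv.swap_apply_left, hj]
        have e2 : z⁻¹ b = i := by
          rw [hzdef, mul_inv_rev, Equiv.Perm.mul_apply, Equiv.swap_inv,
            Equiv.swap_apply_right, hi]
        rw [e1, e2]; exact h
      have := key z a b hab hzi
      rw [hzdef, ← mul_assoc, Equiv.swap_mul_self, one_mul] at this
      exact absurd (hlen.trans this) (lt_irrefl _)
  intro k
  have hzi : z i = b := by rw [hzdef, Equiv.Perm.mul_apply, hyi, Equiv.swap_apply_left]
  have hzj : z j = a := by rw [hzdef, Equiv.Perm.mul_apply, hyj, Equiv.swap_apply_right]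
  rcases eq_or_ne k i with hki | hki
  · rw [hki, hyi]
    calc lam i ≤ lam j := hlam hij.le
      _ ≤ mu (z j) + 1 := hz j
      _ = mu a + 1 := by rw [hzj]
  rcases eq_or_ne k j with hkj | hkj
  · rw [hkj, hyj]
    calc lam j ≤ mu (z j) + 1 := hz j
      _ = mu a + 1 := by rw [hzj]
      _ ≤ mu b + 1 := by have := hmu hab.le; omega
  · have h1 : y k ≠ a := fun h => hki (by rw [hi, ← h]; exact (Equiv.symm_apply_apply y k).symm)
    have h2 : y k ≠ b := fun h => hkj (by rw [hj, ← h]; exact (Equiv.symm_apply_apply y k).symm)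
    have : z k = y k := by
      rw [hzdef, Equiv.Perm.mul_apply, Equiv.swap_apply_of_ne_of_ne h1 h2]
    rw [← this]; exact hz k

lemma step {m : ℕ} (lam mu : Fin m → ℤ) (hlam : Monotone lam) (hmu : Monotone mu)
    (y z : Equiv.Perm (Fin m)) (hlen : PermLength y < PermLength z)
    (t : Equiv.Perm (Fin m)) (ht : t.IsSwap) (hzt : z = t * y)
    (hz : ∀ i, lam i ≤ mu (z i) + 1) :
    ∀ i, lam i ≤ mu (y i) + 1 := by
  obtain ⟨a, b, hab, rfl⟩ := ht
  rcases hab.lt_or_gt with h | h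
  · exact step' lam mu hlam hmu y a b h (hzt ▸ hlen) (hzt ▸ hz)
  · rw [Equiv.swap_comm] at hzt
    exact step' lam mu hlam hmu y b a h (hzt ▸ hlen) (hzt ▸ hz)

/-- `Q(λ,μ) = {w : λ_i ≤ μ_{w(i)} + 1 ∀ i}` is a lower ideal in the Bruhat
order. -/
theorem stmt11 {m : ℕ} (lam mu : Fin m → ℤ) (hlam : Monotone lam) (hmu : Monotone mu)
    (w x : Equiv.Perm (Fin m)) (hw : ∀ i, lam i ≤ mu (w i) + 1)
    (hxw : BruhatLE x w) :
    ∀ i, lam i ≤ mu (x i) + 1 := by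
  induction hxw using Relation.ReflTransGen.head_induction_on with
  | refl => exact hw
  | head h _ ih =>
    obtain ⟨hlen, t, ht, hzt⟩ := h
    exact step lam mu hlam hmu _ _ hlen t ht hzt ih
end

section
/- Let λ, μ be weakly increasing integer sequences of length m, and let {1,...,m} = I_λ ⊔ J_λ = I_μ ⊔ J_μ be partitions with |I_λ| = |I_μ| = k. Write I_λ = {i^λ_1 < ... < i^λ_k} etc. Given w_I ∈ S_k and w_J ∈ S_{m−k}, define w̃ ∈ S_m by w̃(i^λ_t) = i^μ_{w_I(t)} and w̃(j^λ_s) = j^μ_{w_J(s)}. If w_I ∈ Q(λ_I, μ_I) and w_J ∈ Q(λ_J, μ_J) (i.e., (λ_I)_t ≤ (μ_I)_{w_I(t)} + 1 for all t, and similarly for J), then w̃ ∈ Q(λ, μ), i.e., λ_i ≤ μ_{w̃(i)} + 1 for all i, and the multiset equality Σ_{t} [(λ_I)_t, (μ_I)_{w_I(t)}] + Σ_s [(λ_J)_s, (μ_J)_{w_J(s)}] = Σ_i [λ_i, μ_{w̃(i)}] holds. -/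
lemma sumElimBij {m k : ℕ} (hk : k ≤ m)
    (iLam : Fin k → Fin m) (jLam : Fin (m - k) → Fin m)
    (hiLam : Function.Injective iLam) (hjLam : Function.Injective jLam)
    (hcompLam : ∀ x : Fin m, (∃ t, iLam t = x) ↔ ¬ ∃ s, jLam s = x) :
    Function.Bijective (Sum.elim iLam jLam) := by
  have hinj : Function.Injective (Sum.elim iLam jLam) := by
    rintro (a | a) (b | b) h <;> simp only [Sum.elim_inl, Sum.elim_inr] at h
    · exact congrArg _ (hiLam h)
    · exact (((hcompLam (jLam b)).mp ⟨a, h⟩) ⟨b, rfl⟩).elim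
    · exact (((hcompLam (jLam a)).mp ⟨b, h.symm⟩) ⟨a, rfl⟩).elim
    · exact congrArg _ (hjLam h)
  have hcard : Fintype.card (Fin k ⊕ Fin (m - k)) = Fintype.card (Fin m) := by
    simp [Nat.add_sub_cancel' hk]
  exact (Fintype.bijective_iff_injective_and_card _).mpr ⟨hinj, hcard⟩

/-- Section 3.3: compatibility of the `∗` operation. Given partitions
`{1,…,m} = I_λ ⊔ J_λ = I_μ ⊔ J_μ` with `|I_λ| = |I_μ| = k` (encoded by strictly
monotone enumerations with complementary ranges), and `w_I ∈ Q(λ_I, μ_I)`,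
`w_J ∈ Q(λ_J, μ_J)`, there is a permutation `w̃ ∈ S_m` with
`w̃(i^λ_t) = i^μ_{w_I(t)}`, `w̃(j^λ_s) = j^μ_{w_J(s)}`, lying in `Q(λ,μ)`, and
the two multisegments agree as multisets of (possibly trivial) segments. -/
theorem stmt15 {m k : ℕ} (hk : k ≤ m)
    (lam mu : Fin m → ℤ) (hlam : Monotone lam) (hmu : Monotone mu)
    (iLam : Fin k → Fin m) (jLam : Fin (m - k) → Fin m)
    (iMu : Fin k → Fin m) (jMu : Fin (m - k) → Fin m)
    (hiLam : StrictMono iLam) (hjLam : StrictMono jLam)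
    (hiMu : StrictMono iMu) (hjMu : StrictMono jMu)
    (hcompLam : ∀ x : Fin m, (∃ t, iLam t = x) ↔ ¬ ∃ s, jLam s = x)
    (hcompMu : ∀ x : Fin m, (∃ t, iMu t = x) ↔ ¬ ∃ s, jMu s = x)
    (wI : Equiv.Perm (Fin k)) (wJ : Equiv.Perm (Fin (m - k)))
    (hwI : ∀ t, lam (iLam t) ≤ mu (iMu (wI t)) + 1)
    (hwJ : ∀ s, lam (jLam s) ≤ mu (jMu (wJ s)) + 1) :
    ∃ wt : Equiv.Perm (Fin m),
      (∀ t, wt (iLam t) = iMu (wI t)) ∧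
      (∀ s, wt (jLam s) = jMu (wJ s)) ∧
      (∀ i, lam i ≤ mu (wt i) + 1) ∧
      (Finset.univ.val.map (fun t : Fin k => (lam (iLam t), mu (iMu (wI t)))) +
        Finset.univ.val.map (fun s : Fin (m - k) => (lam (jLam s), mu (jMu (wJ s)))) =
        Finset.univ.val.map (fun i : Fin m => (lam i, mu (wt i)))) := by
  have bijL := sumElimBij hk iLam jLam hiLam.injective hjLam.injective hcompLam
  have bijM := sumElimBij hk iMu jMu hiMu.injective hjMu.injective hcompMu
  set eL : (Fin k ⊕ Fin (m - k)) ≃ Fin m := Equiv.ofBijective _ bijL with heL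
  set eM : (Fin k ⊕ Fin (m - k)) ≃ Fin m := Equiv.ofBijective _ bijM with heM
  set wt : Equiv.Perm (Fin m) := (eL.symm.trans (Equiv.sumCongr wI wJ)).trans eM with hwt
  have heLi : ∀ t, eL.symm (iLam t) = Sum.inl t := fun t =>
    eL.symm_apply_eq.mpr rfl
  have heLj : ∀ s, eL.symm (jLam s) = Sum.inr s := fun s =>
    eL.symm_apply_eq.mpr rfl
  have h1 : ∀ t, wt (iLam t) = iMu (wI t) := by
    intro t
    simp only [hwt, Equiv.trans_apply, heLi, Equiv.sumCongr_apply, Sum.map_inl]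
    rfl
  have h2 : ∀ s, wt (jLam s) = jMu (wJ s) := by
    intro s
    simp only [hwt, Equiv.trans_apply, heLj, Equiv.sumCongr_apply, Sum.map_inr]
    rfl
  refine ⟨wt, h1, h2, ?_, ?_⟩
  · intro i
    obtain ⟨x, rfl⟩ := eL.surjective i
    cases x with
    | inl t =>
      have : eL (Sum.inl t) = iLam t := rfl
      rw [this, h1 t]; exact hwI t
    | inr s =>
      have : eL (Sum.inr s) = jLam s := rfl
      rw [this, h2 s]; exact hwJ s
  · have huniv : (Finset.univ : Finset (Fin m)).val = Multiset.map eL Finset.univ.val := by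
      conv_lhs => rw [← Finset.univ_map_equiv_to_embedding eL]
      rfl
    rw [huniv, Multiset.map_map]
    rw [← Finset.univ_disjSum_univ, Finset.val_disjSum, Multiset.disjSum,
      Multiset.map_add, Multiset.map_map, Multiset.map_map]
    congr 1
    · refine Multiset.map_congr rfl fun t _ => ?_
      have h : eL (Sum.inl t) = iLam t := rfl
      simp only [Function.comp_apply, h, h1 t]
    · refine Multiset.map_congr rfl fun s _ => ?_
      have h : eL (Sum.inr s) = jLam s := rfl
      simp only [Function.comp_apply, h, h2 s]
end

section
/- Let w ∈ S_n and k = w(1). Suppose w avoids 321. If there exists an index i_1 with 2 ≤ i_1 ≤ k−1 and w(i_1) > k, then there exist indices i_1 < i_2 < i_3 ≤ n with w(i_2) < w(i_3) < k, and consequently the indices 1 < i_1 < i_2 < i_3 form an occurrence of the pattern 3412 in w. -/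
/-- The counting argument in the proof of Lemma 7.1 (zero-based): if `w` avoids
321, `i₁` satisfies `1 ≤ i₁` and `i₁ + 1 ≤ w(0)` (one-based: `2 ≤ i₁ ≤ k - 1`
with `k = w(1)`), and `w(i₁) > w(0)`, then there exist `i₁ < i₂ < i₃` with
`w(i₂) < w(i₃) < w(0)`; together with `w(0) < w(i₁)` the indices
`(0, i₁, i₂, i₃)` form an occurrence of the pattern 3412 in `w`. -/
theorem stmt19 {n : ℕ} (hn : 0 < n) (w : Equiv.Perm (Fin n)) (h321 : Avoids321 w)
    (i₁ : Fin n) (hi1 : 1 ≤ (i₁ : ℕ)) (hi2 : (i₁ : ℕ) + 1 ≤ (w ⟨0, hn⟩ : ℕ))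
    (hbig : w ⟨0, hn⟩ < w i₁) :
    ∃ i₂ i₃ : Fin n, i₁ < i₂ ∧ i₂ < i₃ ∧
      w i₂ < w i₃ ∧ w i₃ < w ⟨0, hn⟩ ∧ w ⟨0, hn⟩ < w i₁ := by
  set z : Fin n := ⟨0, hn⟩ with hz
  set A : Finset (Fin n) := Finset.univ.filter (fun j => w j < w z) with hA
  have hAcard : A.card = (w z : ℕ) := by
    have himg : A.image w = Finset.Iio (w z) := by
      ext v
      simp only [hA, Finset.mem_image, Finset.mem_filter, Finset.mem_univ, true_and,
        Finset.mem_Iio]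
      constructor
      · rintro ⟨j, hj, rfl⟩; exact hj
      · intro hv; exact ⟨w.symm v, by simp [hv], by simp⟩
    have := Finset.card_image_of_injective A w.injective
    rw [himg, Fin.card_Iio] at this
    omega
  set B : Finset (Fin n) := A.filter (fun j => i₁ < j) with hB
  have hsub : A \ B ⊆ Finset.Ioo z i₁ := by
    intro j hj
    simp only [hB, Finset.mem_sdiff, Finset.mem_filter, hA, Finset.mem_univ, true_and,
      not_and, not_lt] at hj
    obtain ⟨hjw, hle⟩ := hj
    have hle' := hle hjw
    have hjne : j ≠ i₁ := by
      rintro rfl; exact absurd hjw (not_lt.mpr hbig.le)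
    have hjz : j ≠ z := by
      rintro rfl; exact absurd hjw (lt_irrefl _)
    rw [Finset.mem_Ioo]
    refine ⟨?_, lt_of_le_of_ne hle' hjne⟩
    have hjv : (j : ℕ) ≠ 0 := fun h => hjz (Fin.ext (by simp [hz, h]))
    exact Fin.lt_def.mpr (by simp [hz]; omega)
  have hBcard : 2 ≤ B.card := by
    have h1 : (A \ B).card ≤ (Finset.Ioo z i₁).card := Finset.card_le_card hsub
    have h2 : (Finset.Ioo z i₁).card = (i₁ : ℕ) - 1 := by
      rw [Fin.card_Ioo]; simp [hz]
    have h3 := Finset.card_sdiff_add_card_eq_card (show B ⊆ A from Finset.filter_subset _ A)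
    omega
  obtain ⟨p, hp, q, hq, hpq⟩ := Finset.one_lt_card.mp hBcard
  simp only [hB, hA, Finset.mem_filter, Finset.mem_univ, true_and] at hp hq
  have key : ∀ a b : Fin n, a ∈ Finset.univ.filter (fun j => w j < w z) → i₁ < a →
      b ∈ Finset.univ.filter (fun j => w j < w z) → i₁ < b → a < b →
      ∃ i₂ i₃ : Fin n, i₁ < i₂ ∧ i₂ < i₃ ∧
        w i₂ < w i₃ ∧ w i₃ < w z ∧ w z < w i₁ := by
    intro a b ha hia hb hib hab
    simp only [Finset.mem_filter, Finset.mem_univ, true_and] at ha hb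
    have hza : z < a := lt_trans (Fin.lt_def.mpr (by simp [hz]; omega)) hia
    have hwab : w a < w b := by
      rcases lt_or_eq_of_le (le_of_not_gt fun hlt => h321 ⟨z, a, b, hza, hab, hlt, ha⟩) with h | h
      · exact h
      · exact absurd (w.injective h) (ne_of_lt hab)
    exact ⟨a, b, hia, hab, hwab, hb, hbig⟩
  rcases lt_or_gt_of_ne hpq with h | h
  · exact key p q (by simp [hA] at hp ⊢; exact hp.1) hp.2 (by simp [hA] at hq ⊢; exact hq.1) hq.2 h
  · exact key q p (by simp [hA] at hq ⊢; exact hq.1) hq.2 (by simp [hA] at hp ⊢; exact hp.1) hp.2 h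
end
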